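/- Let P ∈ GT(λ+ρ) be a stable GT-pattern of rank r with associated signed permutation w = (σ, ε) ∈ W(C_r). Then for each 1 ≤ i ≤ r: u_{r+1−i,j} = 0 at every minimal entry a_{r+1−i,j} and v_{r+1−i,j} = 0 at every minimal entry b_{r+1−i,j}; and the multiset of values { v_{r+1−i,j} : b_{r+1−i,j} maximal } ∪ { u_{r+1−i,j} : a_{r+1−i,j} maximal } equals the multiset { d_λ(α) : α ∈ Φ_w^{(i)} }. Explicitly: if ε^{(i)} = +1, all v_{r+1−i,j} vanish and the multiset of u-values at maximal entries of row a_{r+1−i} equals { L_{σ^{−1}(j)} − L_{σ^{−1}(i)} : j < i, σ^{−1}(j) > σ^{−1}(i) }; if ε^{(i)} = −1, the multiset of v-values at maximal entries of row b_{r+1−i} equals { L_{σ^{−1}(i)} } ∪ { L_{σ^{−1}(i)} − L_{σ^{−1}(j)} : j < i, σ^{−1}(j) < σ^{−1}(i) } and the multiset of u-values over row a_{r+1−i} (all of whose entries are maximal) equals { L_{σ^{−1}(i)} + L_{σ^{−1}(j)} : j < i }. -/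

import Mathlib

/-! Gelfand–Tsetlin patterns for `Sp(2r)` (type `C_r`), following
Beineke–Brubaker–Frechette. Entries are indexed as in the paper:
row `a i` has entries `a i j` for `i+1 ≤ j ≤ r` (so the top row is `a 0`),
and row `b i` has entries `b i j` for `i ≤ j ≤ r`, `1 ≤ i ≤ r`.
All out-of-range entries are `0`. -/

/-- `Lfun l j = l 1 + l 2 + ⋯ + l j + j`. -/
def Lfun (l : ℕ → ℕ) (j : ℕ) : ℕ := (∑ t ∈ Finset.Icc 1 j, l t) + j

/-- A Gelfand–Tsetlin pattern of rank `r` in `GT(λ+ρ)`, i.e. with top row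
`(L r, L (r-1), …, L 1)` where `L j = l 1 + ⋯ + l j + j`. -/
structure GTPattern (r : ℕ) (l : ℕ → ℕ) where
  a : ℕ → ℕ → ℕ
  b : ℕ → ℕ → ℕ
  a_zero : ∀ i j, ¬(i < r ∧ i + 1 ≤ j ∧ j ≤ r) → a i j = 0
  b_zero : ∀ i j, ¬(1 ≤ i ∧ i ≤ j ∧ j ≤ r) → b i j = 0
  top : ∀ j, 1 ≤ j → j ≤ r → a 0 j = Lfun l (r + 1 - j)
  b_le_a_above : ∀ i j, 1 ≤ i → i ≤ j → j ≤ r → b i j ≤ a (i - 1) j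
  a_above_le_b : ∀ i j, 1 ≤ i → i ≤ j → j < r → a (i - 1) (j + 1) ≤ b i j
  b_le_a_below : ∀ i j, 1 ≤ i → i < r → i + 1 ≤ j → j ≤ r → b i j ≤ a i j
  a_below_le_b : ∀ i j, 1 ≤ i → i < r → i ≤ j → j < r → a i (j + 1) ≤ b i j

namespace GTPattern

variable {r : ℕ} {l : ℕ → ℕ} (P : GTPattern r l)

/-- Row sum `s_a(i) = Σ_{m=i+1}^r a_{i,m}`. -/
def sa (i : ℕ) : ℤ := ∑ m ∈ Finset.Icc (i + 1) r, (P.a i m : ℤ)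

/-- Row sum `s_b(i) = Σ_{m=i}^r b_{i,m}`. -/
def sb (i : ℕ) : ℤ := ∑ m ∈ Finset.Icc i r, (P.b i m : ℤ)

/-- The weight `wgt_i(P) = s_a(r-i) - 2 s_b(r+1-i) + s_a(r+1-i)`. -/
def wgt (i : ℕ) : ℤ := P.sa (r - i) - 2 * P.sb (r + 1 - i) + P.sa (r + 1 - i)

/-- The `k`-coordinates `k_i(P)`. -/
def kcoord (i : ℕ) : ℤ :=
  if i = 1 then P.sa 0 - ∑ m ∈ Finset.Icc 1 r, (P.sb m - P.sa m)
  else P.sa 0 - 2 * ∑ m ∈ Finset.Icc 1 (r + 1 - i), (P.sb m - P.sa m)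
        - P.sa (r + 1 - i) + ∑ m ∈ Finset.Icc 1 (r + 1 - i), (P.a 0 m : ℤ)

/-- `v_{i,j} = Σ_{m=i}^j (a_{i-1,m} - b_{i,m})`. -/
def v (i j : ℕ) : ℤ := ∑ m ∈ Finset.Icc i j, ((P.a (i - 1) m : ℤ) - (P.b i m : ℤ))

/-- `w_{i,j} = Σ_{m=j}^r (a_{i,m} - b_{i,m})`. -/
def w (i j : ℕ) : ℤ := ∑ m ∈ Finset.Icc j r, ((P.a i m : ℤ) - (P.b i m : ℤ))

/-- `u_{i,j} = v_{i,r} + w_{i,j}`. -/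
def u (i j : ℕ) : ℤ := P.v i r + P.w i j

/-- `P` is minimal at `b_{i,j}` if `b_{i,j} = a_{i-1,j}`. -/
def MinimalB (i j : ℕ) : Prop := P.b i j = P.a (i - 1) j

/-- `P` is maximal at `b_{i,j}` if `j < r` and `b_{i,j} = a_{i-1,j+1}`, or `j = r`
and `b_{i,r} = 0`. -/
def MaximalB (i j : ℕ) : Prop :=
  (j < r ∧ P.b i j = P.a (i - 1) (j + 1)) ∨ (j = r ∧ P.b i r = 0)

/-- `P` is minimal at `a_{i,j}` if `a_{i,j} = b_{i,j}`. -/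
def MinimalA (i j : ℕ) : Prop := P.a i j = P.b i j

/-- `P` is maximal at `a_{i,j}` if `a_{i,j} = b_{i,j-1}`. -/
def MaximalA (i j : ℕ) : Prop := P.a i j = P.b i (j - 1)

/-- A pattern is strict if its entries strictly decrease along each row. -/
def Strict : Prop :=
  (∀ i j, i < r → i + 1 ≤ j → j < r → P.a i (j + 1) < P.a i j) ∧
  (∀ i j, 1 ≤ i → i ≤ j → j < r → P.b i (j + 1) < P.b i j)

/-- A pattern is stable if it is strict and every entry below the top row is
minimal or maximal. -/
def Stable : Prop := P.Strict ∧
  (∀ i j, 1 ≤ i → i ≤ j → j ≤ r → P.MinimalB i j ∨ P.MaximalB i j) ∧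
  (∀ i j, 1 ≤ i → i < r → i + 1 ≤ j → j ≤ r → P.MinimalA i j ∨ P.MaximalA i j)

/-- The set of entries of row `a i`. -/
def rowA (i : ℕ) : Finset ℕ := (Finset.Icc (i + 1) r).image (P.a i)

end GTPattern

/-- `alphaC i j` is the `e_j`-coefficient of the simple root `α_i` of `C_r`:
`α_1 = 2 e_1` and `α_i = e_i - e_{i-1}` for `i ≥ 2`. -/
def alphaC (i j : ℕ) : ℤ :=
  if i = 1 then (if j = 1 then 2 else 0)
  else if j = i then 1 else if j = i - 1 then -1 else 0

/-! The root system `C_r` in `ℝ^r`, signed permutations, and the sets `Φ_w`. -/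

/-- The standard basis vector `e k` of `ℝ^r`. -/
noncomputable def eVec (r : ℕ) (k : Fin r) : Fin r → ℝ := fun j => if j = k then 1 else 0

/-- The positive roots of `C_r`:
`Φ⁺ = { 2e_k } ∪ { e_m + e_l, e_m − e_l : l < m }`. -/
def PhiPlus (r : ℕ) : Set (Fin r → ℝ) :=
  {α | (∃ k : Fin r, α = (2 : ℝ) • eVec r k) ∨
       (∃ l m : Fin r, l < m ∧ (α = eVec r m + eVec r l ∨ α = eVec r m - eVec r l))}

/-- The action of a signed permutation `w = (σ, ε)` on `ℝ^r`:
`w(t)_j = ε^{(j)} t_{σ⁻¹(j)}`. -/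
noncomputable def wAct {r : ℕ} (σ : Equiv.Perm (Fin r)) (ε : Fin r → ℤˣ) (t : Fin r → ℝ) :
    Fin r → ℝ :=
  fun j => ((ε j : ℤ) : ℝ) * t (σ⁻¹ j)

/-- `Φ_w = { α ∈ Φ⁺ : w(α) ∈ Φ⁻ }` where `Φ⁻ = −Φ⁺`. -/
def PhiW {r : ℕ} (σ : Equiv.Perm (Fin r)) (ε : Fin r → ℤˣ) : Set (Fin r → ℝ) :=
  {α | α ∈ PhiPlus r ∧ -(wAct σ ε α) ∈ PhiPlus r}

/-- The type-L root `α_{i,w} = 2 e_{σ⁻¹(i)}`. -/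
noncomputable def rootL {r : ℕ} (σ : Equiv.Perm (Fin r)) (i : Fin r) : Fin r → ℝ :=
  (2 : ℝ) • eVec r (σ⁻¹ i)

/-- The type-S⁺ root `α⁺_{i,j,w} = e_{σ⁻¹(j)} + e_{σ⁻¹(i)}`. -/
noncomputable def rootP {r : ℕ} (σ : Equiv.Perm (Fin r)) (i j : Fin r) : Fin r → ℝ :=
  eVec r (σ⁻¹ j) + eVec r (σ⁻¹ i)

/-- The type-S⁻ root `α⁻_{i,j,w}`, equal to `e_{σ⁻¹(j)} − e_{σ⁻¹(i)}` if
`σ⁻¹(j) > σ⁻¹(i)` and to `e_{σ⁻¹(i)} − e_{σ⁻¹(j)}` otherwise. -/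
noncomputable def rootM {r : ℕ} (σ : Equiv.Perm (Fin r)) (i j : Fin r) : Fin r → ℝ :=
  if σ⁻¹ i < σ⁻¹ j then eVec r (σ⁻¹ j) - eVec r (σ⁻¹ i)
  else eVec r (σ⁻¹ i) - eVec r (σ⁻¹ j)

/-- `Φ_w^{(i)}`: those roots `α_{i,w}`, `α⁺_{i,j,w}`, `α⁻_{i,j,w}` (`j < i`)
that lie in `Φ_w`. -/
def PhiWi {r : ℕ} (σ : Equiv.Perm (Fin r)) (ε : Fin r → ℤˣ) (i : Fin r) :
    Set (Fin r → ℝ) :=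
  {α | (α = rootL σ i ∨ ∃ j : Fin r, j < i ∧ (α = rootP σ i j ∨ α = rootM σ i j)) ∧
       α ∈ PhiW σ ε}

/-- The standard inner product on `ℝ^r`. -/
noncomputable def ip {r : ℕ} (x y : Fin r → ℝ) : ℝ := ∑ j, x j * y j

/-- `d_λ(α) = 2⟨λ+ρ, α⟩ / ⟨α, α⟩`, for `λ+ρ = (L_1, …, L_r)`. -/
noncomputable def dlam {r : ℕ} (L : Fin r → ℝ) (α : Fin r → ℝ) : ℝ := 2 * ip L α / ip α α

/-- The vector `λ+ρ = (L_1, …, L_r)` as an element of `ℝ^r`. -/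
noncomputable def Lreal (l : ℕ → ℕ) (r : ℕ) : Fin r → ℝ :=
  fun j => (Lfun l (j.1 + 1) : ℝ)

/-! ### Auxiliary lemmas for the proof -/

namespace GTAux
open Finset

lemma Lfun_strictMono (l : ℕ → ℕ) : StrictMono (Lfun l) := by
  intro j k hjk
  unfold Lfun
  have : ∑ t ∈ Finset.Icc 1 j, l t ≤ ∑ t ∈ Finset.Icc 1 k, l t :=
    Finset.sum_le_sum_of_subset (Finset.Icc_subset_Icc_right hjk.le)
  omega

lemma Lfun_pos (l : ℕ → ℕ) {j : ℕ} (h : 1 ≤ j) : 0 < Lfun l j := by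
  unfold Lfun; omega

lemma sum_tele (f : ℕ → ℤ) (c : ℕ) : ∀ j, c ≤ j →
    ∑ m ∈ Finset.Icc c j, (f m - f (m+1)) = f c - f (j+1) := by
  intro j
  induction j with
  | zero => intro h; interval_cases c; simp
  | succ k ih =>
    intro h
    rcases Nat.lt_or_ge c (k+1) with h' | h'
    · rw [Finset.sum_Icc_succ_top (by omega : c ≤ k + 1)]
      rw [ih (by omega)]; ring
    · have : c = k + 1 := by omega
      subst this; simp

variable {r : ℕ} {l : ℕ → ℕ} (P : GTPattern r l)

/-- Strict decrease along row `a i`, general version. -/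
lemma a_lt (hP : P.Strict) {i j k : ℕ} (hi : i < r) (hj : i + 1 ≤ j) :
    j < k → k ≤ r → P.a i k < P.a i j := by
  intro hjk hk
  induction k with
  | zero => omega
  | succ m ih =>
    rcases Nat.lt_or_ge j m with h' | h'
    · exact lt_trans (hP.1 i m hi (by omega) (by omega)) (ih (by omega) (by omega))
    · have : j = m := by omega
      subst this
      exact hP.1 i j hi hj (by omega)

lemma a_le (hP : P.Strict) {i j k : ℕ} (hi : i < r) (hj : i + 1 ≤ j) :
    j ≤ k → k ≤ r → P.a i k ≤ P.a i j := by
  intro hjk hk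
  rcases Nat.eq_or_lt_of_le hjk with h | h
  · subst h; exact le_refl _
  · exact (a_lt P hP hi hj h hk).le

lemma b_lt (hP : P.Strict) {i j k : ℕ} (hi : 1 ≤ i) (hj : i ≤ j) :
    j < k → k ≤ r → P.b i k < P.b i j := by
  intro hjk hk
  induction k with
  | zero => omega
  | succ m ih =>
    rcases Nat.lt_or_ge j m with h' | h'
    · exact lt_trans (hP.2 i m hi (by omega) (by omega)) (ih (by omega) (by omega))
    · have : j = m := by omega
      subst this
      exact hP.2 i j hi hj (by omega)

lemma b_le (hP : P.Strict) {i j k : ℕ} (hi : 1 ≤ i) (hj : i ≤ j) :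
    j ≤ k → k ≤ r → P.b i k ≤ P.b i j := by
  intro hjk hk
  rcases Nat.eq_or_lt_of_le hjk with h | h
  · subst h; exact le_refl _
  · exact (b_lt P hP hi hj h hk).le

/-- Injectivity of row `a i` on its index range. -/
lemma a_inj (hP : P.Strict) {i j k : ℕ} (hi : i < r) (hj : i + 1 ≤ j) (hjr : j ≤ r)
    (hk : i + 1 ≤ k) (hkr : k ≤ r) (h : P.a i j = P.a i k) : j = k := by
  rcases Nat.lt_trichotomy j k with h' | h' | h'
  · have := a_lt P hP hi hj h' hkr; omega
  · exact h'
  · have := a_lt P hP hi hk h' hjr; omega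

lemma b_inj (hP : P.Strict) {i j k : ℕ} (hi : 1 ≤ i) (hj : i ≤ j) (hjr : j ≤ r)
    (hk : i ≤ k) (hkr : k ≤ r) (h : P.b i j = P.b i k) : j = k := by
  rcases Nat.lt_trichotomy j k with h' | h' | h'
  · have := b_lt P hP hi hj h' hkr; omega
  · exact h'
  · have := b_lt P hP hi hk h' hjr; omega

/-- Maximality propagates to the right along row `b n`. -/
lemma maxB_succ (hP : P.Stable) {n j : ℕ} (hn : 1 ≤ n) (hnj : n ≤ j) (hjr : j < r)
    (h : P.MaximalB n j) : P.MaximalB n (j+1) := by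
  rcases hP.2.1 n (j+1) hn (by omega) (by omega) with hmin | hmax
  · exfalso
    rcases h with ⟨hj, he⟩ | ⟨hj, _⟩
    · have hb : P.b n (j+1) < P.b n j := b_lt P hP.1 hn hnj (by omega) (by omega)
      rw [he, hmin] at hb
      exact lt_irrefl _ hb
    · omega
  · exact hmax

lemma maxB_ge (hP : P.Stable) {n c : ℕ} (hn : 1 ≤ n) (hnc : n ≤ c)
    (h : P.MaximalB n c) : ∀ j, c ≤ j → j ≤ r → P.MaximalB n j := by
  intro j
  induction j with
  | zero =>
    intro h1 h2
    have : c = 0 := by omega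
    subst this; simpa using h
  | succ m ih =>
    intro h1 h2
    rcases Nat.lt_or_ge c (m+1) with h' | h'
    · exact maxB_succ P hP hn (by omega) (by omega) (ih (by omega) (by omega))
    · have : c = m + 1 := by omega
      subst this; exact h

/-- Minimality propagates to the right along row `a n`. -/
lemma minA_succ (hP : P.Stable) {n j : ℕ} (hn : 1 ≤ n) (hnr : n < r) (hnj : n + 1 ≤ j)
    (hjr : j < r) (h : P.MinimalA n j) : P.MinimalA n (j+1) := by
  rcases hP.2.2 n (j+1) hn hnr (by omega) (by omega) with hmin | hmax
  · exact hmin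
  · exfalso
    have hmax' : P.a n (j+1) = P.b n j := by simpa [GTPattern.MaximalA] using hmax
    have ha : P.a n (j+1) < P.a n j := a_lt P hP.1 hnr hnj (by omega) (by omega)
    rw [hmax', h] at ha
    exact lt_irrefl _ ha

lemma minA_ge (hP : P.Stable) {n c : ℕ} (hn : 1 ≤ n) (hnr : n < r) (hnc : n + 1 ≤ c)
    (h : P.MinimalA n c) : ∀ j, c ≤ j → j ≤ r → P.MinimalA n j := by
  intro j
  induction j with
  | zero => intro h1 h2; omega
  | succ m ih =>
    intro h1 h2
    rcases Nat.lt_or_ge c (m+1) with h' | h'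
    · exact minA_succ P hP hn hnr (by omega) (by omega) (ih (by omega) (by omega))
    · have : c = m + 1 := by omega
      subst this; exact h

/-- `MinimalA` and `MaximalA` are mutually exclusive (uses only `b`-strictness). -/
lemma not_minA_maxA (hP : P.Stable) {n j : ℕ} (hn : 1 ≤ n) (hnj : n + 1 ≤ j)
    (hjr : j ≤ r) (h1 : P.MinimalA n j) (h2 : P.MaximalA n j) : False := by
  have hb : P.b n j < P.b n (j - 1) := by
    have := b_lt P hP.1 hn (by omega : n ≤ j - 1) (by omega : j - 1 < j) hjr
    exact this
  rw [← h1, ← h2] at hb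
  exact lt_irrefl _ hb

open scoped Classical in
/-- The cut structure of row `b n`: minimal entries then maximal entries. -/
lemma bcut (hP : P.Stable) {n : ℕ} (hn : 1 ≤ n) (hnr : n ≤ r) :
    ∃ c, n ≤ c ∧ c ≤ r + 1 ∧
      (∀ j, n ≤ j → j < c → P.MinimalB n j ∧ ¬ P.MaximalB n j) ∧
      (∀ j, c ≤ j → j ≤ r → P.MaximalB n j) := by
  classical
  set S := (Finset.Icc n r).filter (fun j => P.MaximalB n j) with hS
  by_cases hSe : S = ∅
  · refine ⟨r + 1, by omega, le_refl _, ?_, by omega⟩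
    intro j h1 h2
    have hjS : j ∉ S := by rw [hSe]; exact Finset.notMem_empty j
    have hnmax : ¬ P.MaximalB n j := by
      intro hmax; exact hjS (Finset.mem_filter.2 ⟨Finset.mem_Icc.2 ⟨h1, by omega⟩, hmax⟩)
    exact ⟨(hP.2.1 n j hn h1 (by omega)).resolve_right hnmax, hnmax⟩
  · have hSne : S.Nonempty := Finset.nonempty_of_ne_empty hSe
    set c := S.min' hSne with hc
    have hcS : c ∈ S := S.min'_mem hSne
    have hcIcc := (Finset.mem_filter.1 hcS).1
    rw [Finset.mem_Icc] at hcIcc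
    have hcmax : P.MaximalB n c := (Finset.mem_filter.1 hcS).2
    refine ⟨c, hcIcc.1, by omega, ?_, ?_⟩
    · intro j h1 h2
      have hnmax : ¬ P.MaximalB n j := by
        intro hmax
        have : c ≤ j := S.min'_le j (Finset.mem_filter.2 ⟨Finset.mem_Icc.2 ⟨h1, by omega⟩, hmax⟩)
        omega
      exact ⟨(hP.2.1 n j hn h1 (by omega)).resolve_right hnmax, hnmax⟩
    · exact maxB_ge P hP hn hcIcc.1 hcmax

open scoped Classical in
/-- The cut structure of row `a n`: maximal entries then minimal entries. -/
lemma acut (hP : P.Stable) {n : ℕ} (hn : 1 ≤ n) (hnr : n < r) :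
    ∃ d, n ≤ d ∧ d ≤ r ∧
      (∀ j, n + 1 ≤ j → j ≤ d → P.MaximalA n j ∧ ¬ P.MinimalA n j) ∧
      (∀ j, d < j → j ≤ r → P.MinimalA n j ∧ ¬ P.MaximalA n j) := by
  classical
  set S := (Finset.Icc (n+1) r).filter (fun j => P.MaximalA n j) with hS
  by_cases hSe : S = ∅
  · refine ⟨n, le_refl _, by omega, by omega, ?_⟩
    intro j h1 h2
    have hnmax : ¬ P.MaximalA n j := by
      intro hmax
      have : j ∈ S := Finset.mem_filter.2 ⟨Finset.mem_Icc.2 ⟨by omega, h2⟩, hmax⟩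
      rw [hSe] at this; exact absurd this (Finset.notMem_empty j)
    exact ⟨(hP.2.2 n j hn hnr (by omega) h2).resolve_right hnmax, hnmax⟩
  · have hSne : S.Nonempty := Finset.nonempty_of_ne_empty hSe
    set d := S.max' hSne with hd
    have hdS : d ∈ S := S.max'_mem hSne
    have hdIcc := (Finset.mem_filter.1 hdS).1
    rw [Finset.mem_Icc] at hdIcc
    have hdmax : P.MaximalA n d := (Finset.mem_filter.1 hdS).2
    refine ⟨d, by omega, hdIcc.2, ?_, ?_⟩
    · intro j h1 h2
      have hnmin : ¬ P.MinimalA n j := by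
        intro hmin
        have hmind : P.MinimalA n d := minA_ge P hP hn hnr h1 hmin d h2 hdIcc.2
        exact not_minA_maxA P hP hn (by omega) hdIcc.2 hmind hdmax
      exact ⟨(hP.2.2 n j hn hnr h1 (by omega)).resolve_left hnmin, hnmin⟩
    · intro j h1 h2
      have hnmax : ¬ P.MaximalA n j := by
        intro hmax
        have : j ≤ d := S.le_max' j (Finset.mem_filter.2 ⟨Finset.mem_Icc.2 ⟨by omega, h2⟩, hmax⟩)
        omega
      exact ⟨(hP.2.2 n j hn hnr (by omega) h2).resolve_right hnmax, hnmax⟩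

/-! ### Sums along rows -/

lemma v_zero_of_min {n j : ℕ} (h : ∀ m, n ≤ m → m ≤ j → P.MinimalB n m) :
    P.v n j = 0 := by
  unfold GTPattern.v
  apply Finset.sum_eq_zero
  intro m hm
  rw [Finset.mem_Icc] at hm
  rw [h m hm.1 hm.2]
  ring

lemma v_tele (hP : P.Stable) {n c j : ℕ} (hn : 1 ≤ n) (hc : n ≤ c) (hcj : c ≤ j)
    (hjr : j ≤ r)
    (hmin : ∀ m, n ≤ m → m < c → P.MinimalB n m)
    (hmax : ∀ m, c ≤ m → m ≤ j → P.MaximalB n m) :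
    P.v n j = (P.a (n-1) c : ℤ) - (P.a (n-1) (j+1) : ℤ) := by
  unfold GTPattern.v
  have hsub : Finset.Icc c j ⊆ Finset.Icc n j :=
    Finset.Icc_subset_Icc_left hc
  rw [← Finset.sum_subset hsub ?h1]
  case h1 =>
    intro m hm hm'
    rw [Finset.mem_Icc] at hm
    rw [Finset.mem_Icc] at hm'
    rw [hmin m hm.1 (by omega)]
    ring
  have : ∀ m ∈ Finset.Icc c j,
      ((P.a (n-1) m : ℤ) - (P.b n m : ℤ))
        = (fun t => (P.a (n-1) t : ℤ)) m - (fun t => (P.a (n-1) t : ℤ)) (m+1) := by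
    intro m hm
    rw [Finset.mem_Icc] at hm
    rcases hmax m hm.1 hm.2 with ⟨hmr, he⟩ | ⟨hmr, he⟩
    · simp [he]
    · have hz : P.a (n-1) (r+1) = 0 := by
        apply P.a_zero
        omega
      simp [he, hz, hmr]
  rw [Finset.sum_congr rfl this, sum_tele _ c j hcj]

lemma w_zero_of_min {n j : ℕ} (h : ∀ m, j ≤ m → m ≤ r → P.MinimalA n m) :
    P.w n j = 0 := by
  unfold GTPattern.w
  apply Finset.sum_eq_zero
  intro m hm
  rw [Finset.mem_Icc] at hm
  rw [h m hm.1 hm.2]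
  ring

lemma w_tele {n j d : ℕ} (hj : 1 ≤ j) (hjd : j ≤ d) (hdr : d ≤ r)
    (hmax : ∀ m, j ≤ m → m ≤ d → P.MaximalA n m)
    (hmin : ∀ m, d < m → m ≤ r → P.MinimalA n m) :
    P.w n j = (P.b n (j-1) : ℤ) - (P.b n d : ℤ) := by
  unfold GTPattern.w
  have hsub : Finset.Icc j d ⊆ Finset.Icc j r :=
    Finset.Icc_subset_Icc_right hdr
  rw [← Finset.sum_subset hsub ?h1]
  case h1 =>
    intro m hm hm'
    rw [Finset.mem_Icc] at hm
    rw [Finset.mem_Icc] at hm'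
    rw [hmin m (by omega) hm.2]
    ring
  have : ∀ m ∈ Finset.Icc j d,
      ((P.a n m : ℤ) - (P.b n m : ℤ))
        = (fun t => (P.b n (t-1) : ℤ)) m - (fun t => (P.b n (t-1) : ℤ)) (m+1) := by
    intro m hm
    rw [Finset.mem_Icc] at hm
    have he : P.a n m = P.b n (m - 1) := hmax m hm.1 hm.2
    simp [he]
  rw [Finset.sum_congr rfl this, sum_tele _ j d hjd]
  norm_num

/-! ### Value sets of the rows -/

/-- The set of entries of row `b n`. -/
noncomputable def Bset (n : ℕ) : Finset ℕ := (Finset.Icc n r).image (P.b n)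

lemma card_rowA (hP : P.Strict) {n : ℕ} : (P.rowA n).card = r - n := by
  unfold GTPattern.rowA
  rcases Nat.lt_or_ge n r with h | h
  · have hinj : Set.InjOn (P.a n) (Finset.Icc (n+1) r) := by
      intro x hx y hy hxy
      simp only [Finset.coe_Icc, Set.mem_Icc] at hx hy
      exact a_inj P hP h hx.1 hx.2 hy.1 hy.2 hxy
    rw [Finset.card_image_of_injOn hinj, Nat.card_Icc]
    omega
  · rw [Finset.Icc_eq_empty (by omega)]
    simp
    omega

lemma card_Bset (hP : P.Strict) {n : ℕ} (hn : 1 ≤ n) (hnr : n ≤ r) :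
    (Bset P n).card = r + 1 - n := by
  unfold Bset
  have hinj : Set.InjOn (P.b n) (Finset.Icc n r) := by
    intro x hx y hy hxy
    simp only [Finset.coe_Icc, Set.mem_Icc] at hx hy
    exact b_inj P hP hn hx.1 hx.2 hy.1 hy.2 hxy
  rw [Finset.card_image_of_injOn hinj, Nat.card_Icc]

lemma sum_rowA (hP : P.Strict) {n : ℕ} :
    ∑ x ∈ P.rowA n, (x : ℤ) = P.sa n := by
  unfold GTPattern.rowA GTPattern.sa
  rcases Nat.lt_or_ge n r with h | h
  · rw [Finset.sum_image]
    intro x hx y hy hxy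
    rw [Finset.mem_coe, Finset.mem_Icc] at hx hy
    exact a_inj P hP h hx.1 hx.2 hy.1 hy.2 hxy
  · rw [Finset.Icc_eq_empty (by omega)]
    simp

lemma sum_Bset (hP : P.Strict) {n : ℕ} (hn : 1 ≤ n) (hnr : n ≤ r) :
    ∑ x ∈ Bset P n, (x : ℤ) = P.sb n := by
  unfold Bset GTPattern.sb
  rw [Finset.sum_image]
  intro x hx y hy hxy
  rw [Finset.mem_coe, Finset.mem_Icc] at hx hy
  exact b_inj P hP hn hx.1 hx.2 hy.1 hy.2 hxy

lemma Bset_subset (hP : P.Stable) {n : ℕ} (hn : 1 ≤ n) (hnr : n ≤ r) :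
    Bset P n ⊆ insert 0 (P.rowA (n-1)) := by
  intro t ht
  unfold Bset at ht
  rw [Finset.mem_image] at ht
  obtain ⟨m, hm, rfl⟩ := ht
  rw [Finset.mem_Icc] at hm
  rcases hP.2.1 n m hn hm.1 hm.2 with hmin | hmax
  · apply Finset.mem_insert_of_mem
    unfold GTPattern.rowA
    rw [Finset.mem_image]
    exact ⟨m, Finset.mem_Icc.2 ⟨by omega, hm.2⟩, hmin.symm⟩
  · rcases hmax with ⟨hmr, he⟩ | ⟨hmr, he⟩
    · apply Finset.mem_insert_of_mem
      unfold GTPattern.rowA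
      rw [Finset.mem_image]
      exact ⟨m + 1, Finset.mem_Icc.2 ⟨by omega, by omega⟩, he.symm⟩
    · subst hmr
      rw [he]
      exact Finset.mem_insert_self 0 _

lemma rowA_subset_Bset (hP : P.Stable) {n : ℕ} (hn : 1 ≤ n) (hnr : n ≤ r) :
    P.rowA n ⊆ Bset P n := by
  intro t ht
  unfold GTPattern.rowA at ht
  rw [Finset.mem_image] at ht
  obtain ⟨m, hm, rfl⟩ := ht
  rw [Finset.mem_Icc] at hm
  have hnr' : n < r := by omega
  rcases hP.2.2 n m hn hnr' hm.1 hm.2 with hmin | hmax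
  · unfold Bset
    rw [Finset.mem_image]
    exact ⟨m, Finset.mem_Icc.2 ⟨by omega, hm.2⟩, hmin.symm⟩
  · unfold Bset
    rw [Finset.mem_image]
    exact ⟨m - 1, Finset.mem_Icc.2 ⟨by omega, by omega⟩, hmax.symm⟩

/-! ### The weight identity in terms of value sets -/

lemma rowA_r_empty : P.rowA r = ∅ := by
  unfold GTPattern.rowA
  rw [Finset.Icc_eq_empty (by omega)]
  rfl

lemma hw_sets (σ : Equiv.Perm (Fin r)) (ε : Fin r → ℤˣ)
    (hw : ∀ j : Fin r,
      (ε j : ℤ) * (Lfun l ((σ⁻¹ j).1 + 1) : ℤ) = - P.wgt (j.1 + 1))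
    (hP : P.Stable) {n : ℕ} (hn : 1 ≤ n) (hnr : n ≤ r)
    (i : Fin r) (hin : (i : ℕ) = r - n) :
    (ε i : ℤ) * (Lfun l ((σ⁻¹ i).1 + 1) : ℤ)
      = 2 * (∑ x ∈ Bset P n, (x : ℤ)) - (∑ x ∈ P.rowA (n-1), (x : ℤ))
        - (∑ x ∈ P.rowA n, (x : ℤ)) := by
  have h := hw i
  rw [h]
  unfold GTPattern.wgt
  have e1 : r - (i.1 + 1) = n - 1 := by omega
  have e2 : r + 1 - (i.1 + 1) = n := by omega
  rw [e1, e2, sum_rowA P hP.1, sum_rowA P hP.1, sum_Bset P hP.1 hn hnr]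
  ring

/-- Each step removes at least one positive entry from the value set. -/
lemma step_removes (σ : Equiv.Perm (Fin r)) (ε : Fin r → ℤˣ)
    (hw : ∀ j : Fin r,
      (ε j : ℤ) * (Lfun l ((σ⁻¹ j).1 + 1) : ℤ) = - P.wgt (j.1 + 1))
    (hP : P.Stable) {n : ℕ} (hn : 1 ≤ n) (hnr : n ≤ r) :
    ((P.rowA n).erase 0).card + 1 ≤ ((P.rowA (n-1)).erase 0).card := by
  set W' := (P.rowA n).erase 0 with hW'
  set W := (P.rowA (n-1)).erase 0 with hW
  have hsub : W' ⊆ W := by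
    intro x hx
    rw [hW', Finset.mem_erase] at hx
    have hx1 : x ∈ Bset P n := rowA_subset_Bset P hP hn hnr hx.2
    have hx2 := Bset_subset P hP hn hnr hx1
    rw [Finset.mem_insert] at hx2
    rw [hW, Finset.mem_erase]
    exact ⟨hx.1, hx2.resolve_left hx.1⟩
  by_contra hcon
  have hcard : W.card ≤ W'.card := by omega
  have heq : W' = W := Finset.eq_of_subset_of_card_le hsub hcard
  -- then all three sums agree and the weight is zero, contradiction
  have hBW : (Bset P n).erase 0 = W' := by
    apply Finset.Subset.antisymm
    · intro x hx
      rw [Finset.mem_erase] at hx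
      have hx2 := Bset_subset P hP hn hnr hx.2
      rw [Finset.mem_insert] at hx2
      rw [heq, hW, Finset.mem_erase]
      exact ⟨hx.1, hx2.resolve_left hx.1⟩
    · intro x hx
      rw [hW', Finset.mem_erase] at hx
      rw [Finset.mem_erase]
      exact ⟨hx.1, rowA_subset_Bset P hP hn hnr hx.2⟩
  have hsum : ∀ (S : Finset ℕ), ∑ x ∈ S.erase 0, (x:ℤ) = ∑ x ∈ S, (x:ℤ) := by
    intro S
    exact Finset.sum_erase S (by norm_num)
  have i : Fin r := ⟨r - n, by omega⟩
  have key := hw_sets P σ ε hw hP hn hnr ⟨r - n, by omega⟩ rfl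
  have e1 : ∑ x ∈ Bset P n, (x:ℤ) = ∑ x ∈ W', (x:ℤ) := by rw [← hsum (Bset P n), hBW]
  have e2 : ∑ x ∈ P.rowA (n-1), (x:ℤ) = ∑ x ∈ W, (x:ℤ) := (hsum _).symm
  have e3 : ∑ x ∈ P.rowA n, (x:ℤ) = ∑ x ∈ W', (x:ℤ) := (hsum _).symm
  rw [e1, e2, e3, heq] at key
  have hz : (ε ⟨r - n, by omega⟩ : ℤ) * (Lfun l ((σ⁻¹ ⟨r - n, by omega⟩).1 + 1) : ℤ) = 0 := by
    rw [key]; ring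
  rcases mul_eq_zero.1 hz with h | h
  · exact Units.ne_zero _ h
  · have : 0 < Lfun l ((σ⁻¹ ⟨r - n, by omega⟩).1 + 1) := Lfun_pos l (by omega)
    omega

lemma card_pos_rowA (σ : Equiv.Perm (Fin r)) (ε : Fin r → ℤˣ)
    (hw : ∀ j : Fin r,
      (ε j : ℤ) * (Lfun l ((σ⁻¹ j).1 + 1) : ℤ) = - P.wgt (j.1 + 1))
    (hP : P.Stable) (hr : 1 ≤ r) {n : ℕ} (hnr : n ≤ r - 1) :
    ((P.rowA n).erase 0).card = r - n := by
  have upper : ∀ m : ℕ, ((P.rowA m).erase 0).card ≤ r - m := by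
    intro m
    calc ((P.rowA m).erase 0).card ≤ (P.rowA m).card :=
          Finset.card_le_card (Finset.erase_subset _ _)
      _ = r - m := card_rowA P hP.1
  have lower : ∀ k, k ≤ r - 1 → k + 1 ≤ ((P.rowA (r-1-k)).erase 0).card := by
    intro k
    induction k with
    | zero =>
      intro _
      have h := step_removes P σ ε hw hP (n := r) hr (le_refl r)
      rw [rowA_r_empty] at h
      simpa using h
    | succ k ih =>
      intro hk
      have h1 := ih (by omega)
      have h2 := step_removes P σ ε hw hP (n := r-1-k) (by omega) (by omega)
      have e : r - 1 - k - 1 = r - 1 - (k+1) := by omega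
      rw [e] at h2
      omega
  have hl := lower (r - 1 - n) (by omega)
  have e : r - 1 - (r - 1 - n) = n := by omega
  rw [e] at hl
  have hu := upper n
  omega

lemma zero_not_mem_rowA (σ : Equiv.Perm (Fin r)) (ε : Fin r → ℤˣ)
    (hw : ∀ j : Fin r,
      (ε j : ℤ) * (Lfun l ((σ⁻¹ j).1 + 1) : ℤ) = - P.wgt (j.1 + 1))
    (hP : P.Stable) (hr : 1 ≤ r) {n : ℕ} (hnr : n ≤ r - 1) :
    0 ∉ P.rowA n := by
  intro h0
  have h1 := card_pos_rowA P σ ε hw hP hr hnr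
  have h2 : ((P.rowA n).erase 0).card = (P.rowA n).card - 1 :=
    Finset.card_erase_of_mem h0
  have h3 : (P.rowA n).card = r - n := card_rowA P hP.1
  omega

/-- The key structural step: at level `n` exactly the value `L_{σ⁻¹(i)}`
(where `i.1 = r - n`) is removed, at the `b`-stage if `ε i = -1` and at
the `a`-stage if `ε i = 1`. -/
lemma step_structure (σ : Equiv.Perm (Fin r)) (ε : Fin r → ℤˣ)
    (hw : ∀ j : Fin r,
      (ε j : ℤ) * (Lfun l ((σ⁻¹ j).1 + 1) : ℤ) = - P.wgt (j.1 + 1))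
    (hP : P.Stable) (hr : 1 ≤ r) {n : ℕ} (hn : 1 ≤ n) (hnr : n ≤ r)
    (i : Fin r) (hin : (i : ℕ) = r - n) :
    Lfun l ((σ⁻¹ i).1 + 1) ∈ P.rowA (n-1) ∧
    P.rowA n = (P.rowA (n-1)).erase (Lfun l ((σ⁻¹ i).1 + 1)) ∧
    ((ε i : ℤ) = 1 → Bset P n = P.rowA (n-1)) ∧
    ((ε i : ℤ) = -1 → Bset P n = insert 0 ((P.rowA (n-1)).erase (Lfun l ((σ⁻¹ i).1 + 1)))) := by
  set μ := Lfun l ((σ⁻¹ i).1 + 1) with hμ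
  have hμpos : 0 < μ := Lfun_pos l (by omega)
  have h0a : (0:ℕ) ∉ P.rowA (n-1) := zero_not_mem_rowA P σ ε hw hP hr (by omega)
  have h0n : (0:ℕ) ∉ P.rowA n := by
    rcases Nat.lt_or_ge n r with h | h
    · exact zero_not_mem_rowA P σ ε hw hP hr (by omega)
    · have : n = r := by omega
      rw [this, rowA_r_empty]
      exact Finset.notMem_empty 0
  have cA1 : (P.rowA (n-1)).card = r - n + 1 := by
    rw [card_rowA P hP.1]; omega
  have cA2 : (P.rowA n).card = r - n := card_rowA P hP.1
  have cB : (Bset P n).card = r + 1 - n := card_Bset P hP.1 hn hnr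
  have hsub1 : P.rowA n ⊆ Bset P n := rowA_subset_Bset P hP hn hnr
  have hsub2 : Bset P n ⊆ insert 0 (P.rowA (n-1)) := Bset_subset P hP hn hnr
  have key := hw_sets P σ ε hw hP hn hnr i hin
  rw [← hμ] at key
  have hε : (ε i : ℤ) = 1 ∨ (ε i : ℤ) = -1 := by
    rcases Int.units_eq_one_or (ε i) with h | h
    · left; simp [h]
    · right; simp [h]
  by_cases hz : (0:ℕ) ∈ Bset P n
  · -- the `b`-row contains a zero: removal at the `b`-stage, `ε i = -1`
    have hBsub : (Bset P n).erase 0 ⊆ P.rowA (n-1) := by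
      intro x hx
      rw [Finset.mem_erase] at hx
      have := hsub2 hx.2
      rw [Finset.mem_insert] at this
      exact this.resolve_left hx.1
    have hAB : P.rowA n ⊆ (Bset P n).erase 0 := by
      intro x hx
      rw [Finset.mem_erase]
      exact ⟨fun h => h0n (h ▸ hx), hsub1 hx⟩
    have hcBe : ((Bset P n).erase 0).card = r - n := by
      rw [Finset.card_erase_of_mem hz, cB]; omega
    have heq : P.rowA n = (Bset P n).erase 0 :=
      Finset.eq_of_subset_of_card_le hAB (by omega)
    have hAsub : P.rowA n ⊆ P.rowA (n-1) := heq ▸ hBsub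
    have hD : ((P.rowA (n-1)) \ (P.rowA n)).card = 1 := by
      rw [Finset.card_sdiff_of_subset hAsub, cA1, cA2]; omega
    obtain ⟨t, ht⟩ := Finset.card_eq_one.1 hD
    have htmem : t ∈ P.rowA (n-1) ∧ t ∉ P.rowA n := by
      have : t ∈ (P.rowA (n-1)) \ (P.rowA n) := ht ▸ Finset.mem_singleton_self t
      rw [Finset.mem_sdiff] at this
      exact this
    have htpos : 0 < t := by
      rcases Nat.eq_zero_or_pos t with h | h
      · exact absurd (h ▸ htmem.1) h0a
      · exact h
    -- sum computation
    have hsumB : ∑ x ∈ Bset P n, (x:ℤ) = ∑ x ∈ P.rowA n, (x:ℤ) := by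
      rw [heq]
      exact (Finset.sum_erase _ (by norm_num)).symm
    have hsumD : (∑ x ∈ (P.rowA (n-1)) \ (P.rowA n), (x:ℤ)) + ∑ x ∈ P.rowA n, (x:ℤ)
        = ∑ x ∈ P.rowA (n-1), (x:ℤ) := Finset.sum_sdiff hAsub
    have hsumt : ∑ x ∈ (P.rowA (n-1)) \ (P.rowA n), (x:ℤ) = (t:ℤ) := by
      rw [ht, Finset.sum_singleton]
    have keyt : (ε i : ℤ) * (μ:ℤ) = -(t:ℤ) := by
      rw [key, hsumB]
      omega
    have hεneg : (ε i : ℤ) = -1 := by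
      rcases hε with h | h
      · rw [h] at keyt; simp at keyt; omega
      · exact h
    have hμt : μ = t := by
      rw [hεneg] at keyt
      simp at keyt
      exact_mod_cast keyt
    have hrowAn : P.rowA n = (P.rowA (n-1)).erase μ := by
      rw [Finset.erase_eq, hμt, ← ht]
      exact (Finset.sdiff_sdiff_eq_self hAsub).symm
    refine ⟨hμt ▸ htmem.1, hrowAn, ?_, ?_⟩
    · intro h1
      rw [h1] at hεneg
      norm_num at hεneg
    · intro _
      rw [← hrowAn, heq]
      exact (Finset.insert_erase hz).symm
  · -- no zero in the `b`-row: removal at the `a`-stage, `ε i = 1`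
    have hBsub : Bset P n ⊆ P.rowA (n-1) := by
      intro x hx
      have := hsub2 hx
      rw [Finset.mem_insert] at this
      rcases this with h | h
      · exact absurd (h ▸ hx) hz
      · exact h
    have heq : Bset P n = P.rowA (n-1) :=
      Finset.eq_of_subset_of_card_le hBsub (by omega)
    have hAsub : P.rowA n ⊆ P.rowA (n-1) := heq ▸ hsub1
    have hD : ((P.rowA (n-1)) \ (P.rowA n)).card = 1 := by
      rw [Finset.card_sdiff_of_subset hAsub, cA1, cA2]; omega
    obtain ⟨t, ht⟩ := Finset.card_eq_one.1 hD
    have htmem : t ∈ P.rowA (n-1) ∧ t ∉ P.rowA n := by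
      have : t ∈ (P.rowA (n-1)) \ (P.rowA n) := ht ▸ Finset.mem_singleton_self t
      rw [Finset.mem_sdiff] at this
      exact this
    have htpos : 0 < t := by
      rcases Nat.eq_zero_or_pos t with h | h
      · exact absurd (h ▸ htmem.1) h0a
      · exact h
    have hsumD : (∑ x ∈ (P.rowA (n-1)) \ (P.rowA n), (x:ℤ)) + ∑ x ∈ P.rowA n, (x:ℤ)
        = ∑ x ∈ P.rowA (n-1), (x:ℤ) := Finset.sum_sdiff hAsub
    have hsumt : ∑ x ∈ (P.rowA (n-1)) \ (P.rowA n), (x:ℤ) = (t:ℤ) := by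
      rw [ht, Finset.sum_singleton]
    have keyt : (ε i : ℤ) * (μ:ℤ) = (t:ℤ) := by
      rw [key, heq]
      omega
    have hεpos : (ε i : ℤ) = 1 := by
      rcases hε with h | h
      · exact h
      · rw [h] at keyt; simp at keyt; omega
    have hμt : μ = t := by
      rw [hεpos] at keyt
      simp at keyt
      exact_mod_cast keyt
    have hrowAn : P.rowA n = (P.rowA (n-1)).erase μ := by
      rw [Finset.erase_eq, hμt, ← ht]
      exact (Finset.sdiff_sdiff_eq_self hAsub).symm
    refine ⟨hμt ▸ htmem.1, hrowAn, fun _ => heq, ?_⟩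
    intro h1
    rw [h1] at hεpos
    norm_num at hεpos

/-! ### Identification of the value sets with sets of `L`-values -/

/-- `LS k = { L_{σ⁻¹(j)} : j.1 < k }`. -/
noncomputable def LS (r : ℕ) (l : ℕ → ℕ) (σ : Equiv.Perm (Fin r)) (k : ℕ) : Finset ℕ :=
  (Finset.univ.filter (fun j : Fin r => j.1 < k)).image
    (fun j => Lfun l ((σ⁻¹ j).1 + 1))

lemma mem_LS {σ : Equiv.Perm (Fin r)} {k : ℕ} {t : ℕ} :
    t ∈ LS r l σ k ↔ ∃ j : Fin r, j.1 < k ∧ Lfun l ((σ⁻¹ j).1 + 1) = t := by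
  unfold LS
  simp [Finset.mem_image, Finset.mem_filter]

lemma Linj (σ : Equiv.Perm (Fin r)) :
    Function.Injective (fun j : Fin r => Lfun l ((σ⁻¹ j).1 + 1)) := by
  intro x y h
  simp only at h
  have := (Lfun_strictMono l).injective h
  have : (σ⁻¹ x).1 = (σ⁻¹ y).1 := by omega
  have : σ⁻¹ x = σ⁻¹ y := Fin.ext this
  exact σ⁻¹.injective this

lemma rowA_eq_LS (σ : Equiv.Perm (Fin r)) (ε : Fin r → ℤˣ)
    (hw : ∀ j : Fin r,
      (ε j : ℤ) * (Lfun l ((σ⁻¹ j).1 + 1) : ℤ) = - P.wgt (j.1 + 1))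
    (hP : P.Stable) (hr : 1 ≤ r) :
    ∀ n, n ≤ r → P.rowA n = LS r l σ (r - n) := by
  intro n
  induction n with
  | zero =>
    intro _
    ext t
    unfold GTPattern.rowA
    rw [mem_LS, Finset.mem_image]
    constructor
    · rintro ⟨m, hm, rfl⟩
      rw [Finset.mem_Icc] at hm
      refine ⟨σ ⟨r - m, by omega⟩, by omega, ?_⟩
      rw [show σ⁻¹ (σ ⟨r - m, by omega⟩) = ⟨r - m, by omega⟩ from σ.symm_apply_apply _]
      rw [P.top m hm.1 hm.2]
      congr 1
      simp
      omega
    · rintro ⟨j, hj, rfl⟩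
      refine ⟨r - (σ⁻¹ j).1, Finset.mem_Icc.2 ⟨by omega, by omega⟩, ?_⟩
      rw [P.top (r - (σ⁻¹ j).1) (by omega) (by omega)]
      congr 1
      omega
  | succ n ih =>
    intro hnr
    have hih := ih (by omega)
    have hss := step_structure P σ ε hw hP hr (n := n+1) (by omega) hnr
      ⟨r - (n+1), by omega⟩ rfl
    have e : n + 1 - 1 = n := by omega
    rw [e] at hss
    rw [hss.2.1, hih]
    ext t
    rw [Finset.mem_erase, mem_LS, mem_LS]
    constructor
    · rintro ⟨hne, j, hj, rfl⟩
      refine ⟨j, ?_, rfl⟩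
      have hji : j ≠ ⟨r - (n+1), by omega⟩ := by
        intro h
        exact hne (by rw [h])
      have : j.1 ≠ r - (n + 1) := fun h => hji (Fin.ext h)
      omega
    · rintro ⟨j, hj, rfl⟩
      have hji : j ≠ (⟨r - (n+1), by omega⟩ : Fin r) := by
        intro h
        rw [h] at hj
        simp at hj
      refine ⟨?_, j, by omega, rfl⟩
      intro h
      exact hji (Linj σ h)

/-! ### Positional structure -/

/-- If row `a n` has maximal entries exactly up to `d`, its value set is the
value set of row `b n` minus `b n d`. -/
lemma rowA_eq_Bset_erase (hP : P.Stable) {n d : ℕ} (hn : 1 ≤ n) (hnr : n < r)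
    (hnd : n ≤ d) (hdr : d ≤ r)
    (hmax : ∀ j, n + 1 ≤ j → j ≤ d → P.MaximalA n j)
    (hmin : ∀ j, d < j → j ≤ r → P.MinimalA n j) :
    P.rowA n = (Bset P n).erase (P.b n d) := by
  ext t
  rw [Finset.mem_erase]
  unfold GTPattern.rowA Bset
  rw [Finset.mem_image, Finset.mem_image]
  constructor
  · rintro ⟨j, hj, rfl⟩
    rw [Finset.mem_Icc] at hj
    rcases le_or_gt j d with h | h
    · have he : P.a n j = P.b n (j-1) := hmax j hj.1 h
      have hne : P.b n (j-1) ≠ P.b n d := by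
        have := b_lt P hP.1 hn (by omega : n ≤ j - 1) (by omega : j - 1 < d) hdr
        omega
      exact ⟨he ▸ hne, ⟨j - 1, Finset.mem_Icc.2 ⟨by omega, by omega⟩, he.symm⟩⟩
    · have he : P.a n j = P.b n j := hmin j h hj.2
      have hne : P.b n j ≠ P.b n d := by
        have := b_lt P hP.1 hn (by omega : n ≤ d) h hj.2
        omega
      exact ⟨he ▸ hne, ⟨j, Finset.mem_Icc.2 ⟨by omega, hj.2⟩, he.symm⟩⟩
  · rintro ⟨hne, m, hm, rfl⟩
    rw [Finset.mem_Icc] at hm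
    have hmd : m ≠ d := by
      intro h
      exact hne (by rw [h])
    rcases Nat.lt_or_ge m d with h | h
    · have he : P.a n (m+1) = P.b n m := hmax (m+1) (by omega) (by omega)
      exact ⟨m + 1, Finset.mem_Icc.2 ⟨by omega, by omega⟩, he⟩
    · have hmd' : d < m := by omega
      have he : P.a n m = P.b n m := hmin m hmd' hm.2
      exact ⟨m, Finset.mem_Icc.2 ⟨by omega, hm.2⟩, he⟩

/-- Structure of level `n = r - i.1` when `ε i = 1`. -/
lemma eps_pos_struct (σ : Equiv.Perm (Fin r)) (ε : Fin r → ℤˣ)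
    (hw : ∀ j : Fin r,
      (ε j : ℤ) * (Lfun l ((σ⁻¹ j).1 + 1) : ℤ) = - P.wgt (j.1 + 1))
    (hP : P.Stable) (hr : 1 ≤ r) {n : ℕ} (hn : 1 ≤ n) (hnr : n ≤ r)
    (i : Fin r) (hin : (i : ℕ) = r - n) (hε : (ε i : ℤ) = 1) :
    (∀ j, n ≤ j → j ≤ r → P.MinimalB n j ∧ ¬ P.MaximalB n j) ∧
    (∀ j, P.v n j = 0) ∧
    (n < r → ∃ d, n ≤ d ∧ d ≤ r ∧
      (∀ j, n + 1 ≤ j → j ≤ d → P.MaximalA n j ∧ ¬ P.MinimalA n j) ∧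
      (∀ j, d < j → j ≤ r → P.MinimalA n j ∧ ¬ P.MaximalA n j) ∧
      P.b n d = Lfun l ((σ⁻¹ i).1 + 1) ∧
      (∀ j, n + 1 ≤ j → j ≤ d →
        P.u n j = (P.b n (j-1) : ℤ) - (Lfun l ((σ⁻¹ i).1 + 1) : ℤ)) ∧
      (∀ j, d < j → j ≤ r → P.u n j = 0)) := by
  set μ := Lfun l ((σ⁻¹ i).1 + 1) with hμ
  have hss := step_structure P σ ε hw hP hr hn hnr i hin
  have hB : Bset P n = P.rowA (n-1) := hss.2.2.1 hε
  have h0a : (0:ℕ) ∉ P.rowA (n-1) := zero_not_mem_rowA P σ ε hw hP hr (by omega)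
  have hminB : ∀ j, n ≤ j → j ≤ r → P.MinimalB n j ∧ ¬ P.MaximalB n j := by
    intro j hj hjr'
    have hnmax : ¬ P.MaximalB n j := by
      intro hmax
      have hmaxr : P.MaximalB n r := maxB_ge P hP hn hj hmax r hjr' (le_refl r)
      have hbr0 : P.b n r = 0 := by
        rcases hmaxr with ⟨h1, _⟩ | ⟨_, h2⟩
        · omega
        · exact h2
      have : (0:ℕ) ∈ Bset P n := by
        unfold Bset
        rw [Finset.mem_image]
        exact ⟨r, Finset.mem_Icc.2 ⟨hnr, le_refl r⟩, hbr0⟩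
      rw [hB] at this
      exact h0a this
    exact ⟨(hP.2.1 n j hn hj hjr').resolve_right hnmax, hnmax⟩
  have hv : ∀ j, P.v n j = 0 := by
    intro j
    apply v_zero_of_min
    intro m hm hmj
    rcases le_or_gt m r with h | h
    · exact (hminB m hm h).1
    · unfold GTPattern.MinimalB
      rw [P.b_zero n m (by omega), P.a_zero (n-1) m (by omega)]
  refine ⟨hminB, hv, ?_⟩
  intro hnr'
  obtain ⟨d, hnd, hdr, hdmax, hdmin⟩ := acut P hP hn hnr'
  have hposA : P.rowA n = (Bset P n).erase (P.b n d) :=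
    rowA_eq_Bset_erase P hP hn hnr' hnd hdr (fun j h1 h2 => (hdmax j h1 h2).1)
      (fun j h1 h2 => (hdmin j h1 h2).1)
  have hμB : μ ∈ Bset P n := by
    rw [hB]
    exact hss.1
  have hμA : μ ∉ P.rowA n := by
    rw [hss.2.1]
    exact Finset.notMem_erase μ _
  have hbd : P.b n d = μ := by
    by_contra hne
    apply hμA
    rw [hposA, Finset.mem_erase]
    exact ⟨fun h => hne h.symm, hμB⟩
  refine ⟨d, hnd, hdr, hdmax, hdmin, hbd, ?_, ?_⟩
  · intro j h1 h2
    unfold GTPattern.u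
    rw [hv r]
    have hw' := w_tele P (n := n) (by omega : 1 ≤ j) h2 hdr
      (fun m hm1 hm2 => (hdmax m (by omega) hm2).1)
      (fun m hm1 hm2 => (hdmin m hm1 hm2).1)
    rw [hw', hbd]
    ring
  · intro j h1 h2
    unfold GTPattern.u
    rw [hv r]
    have hw' := w_zero_of_min P (n := n) (j := j)
      (fun m hm1 hm2 => (hdmin m (by omega) hm2).1)
    rw [hw']
    ring

/-- Structure of level `n = r - i.1` when `ε i = -1`. -/
lemma eps_neg_struct (σ : Equiv.Perm (Fin r)) (ε : Fin r → ℤˣ)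
    (hw : ∀ j : Fin r,
      (ε j : ℤ) * (Lfun l ((σ⁻¹ j).1 + 1) : ℤ) = - P.wgt (j.1 + 1))
    (hP : P.Stable) (hr : 1 ≤ r) {n : ℕ} (hn : 1 ≤ n) (hnr : n ≤ r)
    (i : Fin r) (hin : (i : ℕ) = r - n) (hε : (ε i : ℤ) = -1) :
    ∃ c, n ≤ c ∧ c ≤ r ∧
      (∀ j, n ≤ j → j < c → P.MinimalB n j ∧ ¬ P.MaximalB n j) ∧
      (∀ j, c ≤ j → j ≤ r → P.MaximalB n j ∧ ¬ P.MinimalB n j) ∧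
      (∀ j, n ≤ j → j ≤ r → P.MinimalB n j → P.v n j = 0) ∧
      P.a (n-1) c = Lfun l ((σ⁻¹ i).1 + 1) ∧
      (∀ j, c ≤ j → j ≤ r →
        P.v n j = (Lfun l ((σ⁻¹ i).1 + 1) : ℤ) - (P.a (n-1) (j+1) : ℤ)) ∧
      (∀ j, n + 1 ≤ j → j ≤ r → P.MaximalA n j ∧ ¬ P.MinimalA n j) ∧
      (∀ j, n + 1 ≤ j → j ≤ r →
        P.u n j = (Lfun l ((σ⁻¹ i).1 + 1) : ℤ) + (P.b n (j-1) : ℤ)) := by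
  set μ := Lfun l ((σ⁻¹ i).1 + 1) with hμ
  have hss := step_structure P σ ε hw hP hr hn hnr i hin
  have hB : Bset P n = insert 0 ((P.rowA (n-1)).erase μ) := hss.2.2.2 hε
  have h0a : (0:ℕ) ∉ P.rowA (n-1) := zero_not_mem_rowA P σ ε hw hP hr (by omega)
  have h0n : (0:ℕ) ∉ P.rowA n := by
    rw [hss.2.1]
    intro h
    exact h0a (Finset.mem_of_mem_erase h)
  have hbr0 : P.b n r = 0 := by
    have h0B : (0:ℕ) ∈ Bset P n := by
      rw [hB]; exact Finset.mem_insert_self 0 _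
    unfold Bset at h0B
    rw [Finset.mem_image] at h0B
    obtain ⟨m, hm, hm0⟩ := h0B
    rw [Finset.mem_Icc] at hm
    have := b_le P hP.1 hn hm.1 hm.2 (le_refl r)
    omega
  have hmaxr : P.MaximalB n r := Or.inr ⟨rfl, hbr0⟩
  obtain ⟨c, hnc, hcr1, hcmin, hcmax⟩ := bcut P hP hn hnr
  have hcr : c ≤ r := by
    by_contra h
    have : c = r + 1 := by omega
    exact ((hcmin r hnr (by omega)).2) hmaxr
  -- maximal positions are not minimal
  have hmaxnotmin : ∀ j, c ≤ j → j ≤ r → P.MaximalB n j ∧ ¬ P.MinimalB n j := by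
    intro j h1 h2
    refine ⟨hcmax j h1 h2, ?_⟩
    intro hmin
    rcases hcmax j h1 h2 with ⟨hjr', he⟩ | ⟨hjr', he⟩
    · have := a_lt P hP.1 (by omega : n - 1 < r) (by omega : (n-1) + 1 ≤ j)
        (by omega : j < j + 1) (by omega : j + 1 ≤ r)
      unfold GTPattern.MinimalB at hmin
      omega
    · apply h0a
      unfold GTPattern.rowA
      rw [Finset.mem_image]
      have : P.a (n-1) r = 0 := by
        unfold GTPattern.MinimalB at hmin
        rw [hjr'] at hmin
        omega
      exact ⟨r, Finset.mem_Icc.2 ⟨by omega, le_refl r⟩, this⟩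
  -- identification of the removed value
  have hacA : P.a (n-1) c ∈ P.rowA (n-1) := by
    unfold GTPattern.rowA
    rw [Finset.mem_image]
    exact ⟨c, Finset.mem_Icc.2 ⟨by omega, hcr⟩, rfl⟩
  have hacpos : P.a (n-1) c ≠ 0 := fun h => h0a (h ▸ hacA)
  have hacB : P.a (n-1) c ∉ Bset P n := by
    unfold Bset
    rw [Finset.mem_image]
    rintro ⟨m, hm, hme⟩
    rw [Finset.mem_Icc] at hm
    rcases Nat.lt_or_ge m c with h | h
    · have hmin := (hcmin m hm.1 h).1
      unfold GTPattern.MinimalB at hmin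
      have := a_lt P hP.1 (by omega : n - 1 < r) (by omega : (n-1) + 1 ≤ m)
        (by omega : m < c) hcr
      omega
    · rcases hcmax m h hm.2 with ⟨hmr', he⟩ | ⟨hmr', he⟩
      · have := a_lt P hP.1 (by omega : n - 1 < r) (by omega : (n-1) + 1 ≤ c)
          (by omega : c < m + 1) (by omega : m + 1 ≤ r)
        omega
      · rw [hmr'] at hme
        rw [hbr0] at hme
        exact hacpos hme.symm
  have hac : P.a (n-1) c = μ := by
    have h1 : P.a (n-1) c ∉ (P.rowA (n-1)).erase μ := by
      intro h
      apply hacB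
      rw [hB]
      exact Finset.mem_insert_of_mem h
    rw [Finset.mem_erase] at h1
    push_neg at h1
    by_contra hne
    exact (h1 hne) hacA
  have hvmin : ∀ j, n ≤ j → j ≤ r → P.MinimalB n j → P.v n j = 0 := by
    intro j h1 h2 hmin
    have hjc : j < c := by
      by_contra h
      exact (hmaxnotmin j (by omega) h2).2 hmin
    apply v_zero_of_min
    intro m hm hmj
    exact (hcmin m hm (by omega)).1
  have hvtele : ∀ j, c ≤ j → j ≤ r →
      P.v n j = (μ : ℤ) - (P.a (n-1) (j+1) : ℤ) := by
    intro j h1 h2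
    rw [v_tele P hP hn hnc h1 h2 (fun m hm1 hm2 => (hcmin m hm1 hm2).1)
      (fun m hm1 hm2 => hcmax m hm1 (by omega)), hac]
  -- every entry of row `a n` is maximal
  have hallmax : ∀ j, n + 1 ≤ j → j ≤ r → P.MaximalA n j ∧ ¬ P.MinimalA n j := by
    intro j h1 h2
    have hnr' : n < r := by omega
    have hnmin : ¬ P.MinimalA n j := by
      intro hmin
      have hminr : P.MinimalA n r := minA_ge P hP hn hnr' h1 hmin r h2 (le_refl r)
      apply h0n
      unfold GTPattern.rowA
      rw [Finset.mem_image]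
      refine ⟨r, Finset.mem_Icc.2 ⟨by omega, le_refl r⟩, ?_⟩
      unfold GTPattern.MinimalA at hminr
      omega
    exact ⟨(hP.2.2 n j hn hnr' h1 h2).resolve_left hnmin, hnmin⟩
  refine ⟨c, hnc, hcr, hcmin, hmaxnotmin, hvmin, hac, hvtele, hallmax, ?_⟩
  intro j h1 h2
  unfold GTPattern.u
  have hvr : P.v n r = (μ:ℤ) := by
    rw [hvtele r hcr (le_refl r)]
    rw [P.a_zero (n-1) (r+1) (by omega)]
    ring
  have hwj : P.w n j = (P.b n (j-1) : ℤ) := by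
    rw [w_tele P (n := n) (d := r) (by omega : 1 ≤ j) h2 (le_refl r)
      (fun m hm1 hm2 => (hallmax m (by omega) hm2).1)
      (fun m hm1 hm2 => by omega)]
    rw [hbr0]
    ring
  rw [hvr, hwj]

/-! ### Inner products and `d_λ` values -/

lemma ip_comm (x y : Fin r → ℝ) : ip x y = ip y x := by
  unfold ip
  exact Finset.sum_congr rfl (fun j _ => mul_comm _ _)

lemma ip_eVec_right (x : Fin r → ℝ) (k : Fin r) : ip x (eVec r k) = x k := by
  unfold ip eVec
  rw [Finset.sum_eq_single k]
  · simp
  · intro b _ hb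
    simp [hb]
  · intro h
    simp at h

lemma ip_add_right (x y z : Fin r → ℝ) : ip x (y + z) = ip x y + ip x z := by
  unfold ip
  rw [← Finset.sum_add_distrib]
  exact Finset.sum_congr rfl (fun j _ => by simp [Pi.add_apply]; ring)

lemma ip_sub_right (x y z : Fin r → ℝ) : ip x (y - z) = ip x y - ip x z := by
  unfold ip
  rw [← Finset.sum_sub_distrib]
  exact Finset.sum_congr rfl (fun j _ => by simp [Pi.sub_apply]; ring)

lemma ip_smul_right (x y : Fin r → ℝ) (c : ℝ) : ip x (c • y) = c * ip x y := by
  unfold ip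
  rw [Finset.mul_sum]
  exact Finset.sum_congr rfl (fun j _ => by simp [Pi.smul_apply]; ring)

lemma eVec_self (k : Fin r) : eVec r k k = 1 := by simp [eVec]

lemma eVec_ne {k m : Fin r} (h : m ≠ k) : eVec r k m = 0 := by simp [eVec, h]

lemma dlam_rootL (L : Fin r → ℝ) (σ : Equiv.Perm (Fin r)) (i : Fin r) :
    dlam L (rootL σ i) = L (σ⁻¹ i) := by
  unfold dlam rootL
  rw [ip_smul_right, ip_eVec_right]
  rw [ip_smul_right, ip_comm, ip_smul_right, ip_eVec_right, eVec_self]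
  ring

lemma dlam_add (L : Fin r → ℝ) {a b : Fin r} (h : a ≠ b) :
    dlam L (eVec r a + eVec r b) = L a + L b := by
  unfold dlam
  rw [ip_add_right, ip_eVec_right, ip_eVec_right]
  rw [ip_add_right, ip_comm, ip_add_right, ip_eVec_right, ip_eVec_right,
    ip_comm, ip_add_right, ip_eVec_right, ip_eVec_right]
  rw [eVec_self, eVec_self, eVec_ne h, eVec_ne (Ne.symm h)]
  ring

lemma dlam_sub (L : Fin r → ℝ) {a b : Fin r} (h : a ≠ b) :
    dlam L (eVec r a - eVec r b) = L a - L b := by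
  unfold dlam
  rw [ip_sub_right, ip_eVec_right, ip_eVec_right]
  rw [ip_sub_right, ip_comm, ip_sub_right, ip_eVec_right, ip_eVec_right,
    ip_comm, ip_sub_right, ip_eVec_right, ip_eVec_right]
  rw [eVec_self, eVec_self, eVec_ne h, eVec_ne (Ne.symm h)]
  ring

lemma dlam_rootP (L : Fin r → ℝ) (σ : Equiv.Perm (Fin r)) {i j : Fin r} (h : j ≠ i) :
    dlam L (rootP σ i j) = L (σ⁻¹ j) + L (σ⁻¹ i) := by
  unfold rootP
  exact dlam_add L (fun he => h (σ⁻¹.injective he))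

lemma dlam_rootM_lt (L : Fin r → ℝ) (σ : Equiv.Perm (Fin r)) {i j : Fin r}
    (h : σ⁻¹ j < σ⁻¹ i) :
    dlam L (rootM σ i j) = L (σ⁻¹ i) - L (σ⁻¹ j) := by
  unfold rootM
  rw [if_neg (by omega)]
  exact dlam_sub L (by intro he; rw [he] at h; exact lt_irrefl _ h)

lemma dlam_rootM_gt (L : Fin r → ℝ) (σ : Equiv.Perm (Fin r)) {i j : Fin r}
    (h : σ⁻¹ i < σ⁻¹ j) :
    dlam L (rootM σ i j) = L (σ⁻¹ j) - L (σ⁻¹ i) := by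
  unfold rootM
  rw [if_pos h]
  exact dlam_sub L (by intro he; rw [he] at h; exact lt_irrefl _ h)

/-! ### Membership in `Φ⁺` -/

lemma mem_PhiPlus_two_smul (k : Fin r) : (2:ℝ) • eVec r k ∈ PhiPlus r :=
  Or.inl ⟨k, rfl⟩

lemma mem_PhiPlus_add {a b : Fin r} (h : b ≠ a) :
    eVec r a + eVec r b ∈ PhiPlus r := by
  rcases lt_or_gt_of_ne h with h' | h'
  · exact Or.inr ⟨b, a, h', Or.inl rfl⟩
  · exact Or.inr ⟨a, b, h', Or.inl (add_comm _ _)⟩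

lemma PhiPlus_pos_coord {v : Fin r → ℝ} (h : v ∈ PhiPlus r) : ∃ k, 0 < v k := by
  rcases h with ⟨k, rfl⟩ | ⟨a, b, hab, he | he⟩
  · exact ⟨k, by simp [eVec]⟩
  · refine ⟨b, ?_⟩
    rw [he]
    have : a ≠ b := ne_of_lt hab
    simp [Pi.add_apply, eVec_self, eVec_ne (Ne.symm this)]
  · refine ⟨b, ?_⟩
    rw [he]
    have : a ≠ b := ne_of_lt hab
    simp [Pi.sub_apply, eVec_self, eVec_ne (Ne.symm this)]

lemma not_mem_PhiPlus_nonpos {v : Fin r → ℝ} (h : ∀ k, v k ≤ 0) :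
    v ∉ PhiPlus r := by
  intro hv
  obtain ⟨k, hk⟩ := PhiPlus_pos_coord hv
  have := h k
  linarith

lemma mem_PhiPlus_sub_iff {a b : Fin r} (h : b ≠ a) :
    eVec r a - eVec r b ∈ PhiPlus r ↔ b < a := by
  constructor
  · intro hv
    rcases hv with ⟨k, he⟩ | ⟨p, q, hpq, he | he⟩
    · exfalso
      have hb := congrFun he b
      simp only [Pi.sub_apply, Pi.smul_apply, eVec, smul_eq_mul] at hb
      rw [if_neg h] at hb
      simp only [if_true] at hb
      split_ifs at hb <;> norm_num at hb
    · exfalso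
      have hb := congrFun he b
      simp only [Pi.sub_apply, Pi.add_apply, eVec] at hb
      rw [if_neg h] at hb
      simp only [if_true] at hb
      split_ifs at hb <;> norm_num at hb
    · have hb := congrFun he b
      simp only [Pi.sub_apply, eVec] at hb
      rw [if_neg h] at hb
      simp only [if_true] at hb
      have ha := congrFun he a
      simp only [Pi.sub_apply, eVec] at ha
      rw [if_neg (Ne.symm h)] at ha
      simp only [if_true] at ha
      by_cases hbq : b = q
      · by_cases hbp : b = p
        · exact absurd (hbp.symm.trans hbq) (ne_of_lt hpq)
        · rw [if_pos hbq, if_neg hbp] at hb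
          norm_num at hb
      · by_cases hbp : b = p
        · by_cases haq : a = q
          · rw [hbp, haq]
            exact hpq
          · by_cases hap : a = p
            · rw [if_neg haq, if_pos hap] at ha
              norm_num at ha
            · rw [if_neg haq, if_neg hap] at ha
              norm_num at ha
        · rw [if_neg hbq, if_neg hbp] at hb
          norm_num at hb
  · intro hab
    exact Or.inr ⟨b, a, hab, Or.inr rfl⟩

/-! ### Action of `w` on the candidate roots -/

lemma eVec_sigma (σ : Equiv.Perm (Fin r)) (p m : Fin r) :
    eVec r (σ⁻¹ p) (σ⁻¹ m) = eVec r p m := by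
  unfold eVec
  by_cases h : m = p
  · rw [if_pos (by rw [h]), if_pos h]
  · rw [if_neg (fun hc => h (σ⁻¹.injective hc)), if_neg h]

lemma wAct_rootL_apply (σ : Equiv.Perm (Fin r)) (ε : Fin r → ℤˣ) (i m : Fin r) :
    wAct σ ε (rootL σ i) m = ((ε m : ℤ) : ℝ) * (2 * eVec r i m) := by
  unfold wAct rootL
  rw [Pi.smul_apply, smul_eq_mul, eVec_sigma]

lemma wAct_rootP_apply (σ : Equiv.Perm (Fin r)) (ε : Fin r → ℤˣ) (i j m : Fin r) :
    wAct σ ε (rootP σ i j) m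
      = ((ε m : ℤ) : ℝ) * (eVec r j m + eVec r i m) := by
  unfold wAct rootP
  rw [Pi.add_apply, eVec_sigma, eVec_sigma]

lemma wAct_sub_apply (σ : Equiv.Perm (Fin r)) (ε : Fin r → ℤˣ) (p q m : Fin r) :
    wAct σ ε (eVec r (σ⁻¹ p) - eVec r (σ⁻¹ q)) m
      = ((ε m : ℤ) : ℝ) * (eVec r p m - eVec r q m) := by
  unfold wAct
  rw [Pi.sub_apply, eVec_sigma, eVec_sigma]

/-- `α_{i,w} ∈ Φ_w` iff `ε i = -1`. -/
lemma rootL_mem_PhiW_neg {σ : Equiv.Perm (Fin r)} {ε : Fin r → ℤˣ} {i : Fin r}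
    (hε : (ε i : ℤ) = -1) : rootL σ i ∈ PhiW σ ε := by
  refine ⟨mem_PhiPlus_two_smul _, ?_⟩
  have he : -(wAct σ ε (rootL σ i)) = (2:ℝ) • eVec r i := by
    funext m
    rw [Pi.neg_apply, wAct_rootL_apply, Pi.smul_apply, smul_eq_mul]
    by_cases h : m = i
    · subst h
      rw [hε, eVec_self]
      norm_num
    · rw [eVec_ne h]
      ring
  rw [he]
  exact mem_PhiPlus_two_smul i

lemma rootL_not_mem_PhiW_pos {σ : Equiv.Perm (Fin r)} {ε : Fin r → ℤˣ} {i : Fin r}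
    (hε : (ε i : ℤ) = 1) : rootL σ i ∉ PhiW σ ε := by
  rintro ⟨_, hneg⟩
  apply not_mem_PhiPlus_nonpos (v := -(wAct σ ε (rootL σ i))) ?_ hneg
  intro k
  rw [Pi.neg_apply, wAct_rootL_apply]
  by_cases h : k = i
  · subst h
    rw [hε, eVec_self]
    norm_num
  · rw [eVec_ne h]
    norm_num

/-- `α⁺_{i,j,w} ∈ Φ_w` when `ε i = -1` and `j < i`. -/
lemma rootP_mem_PhiW_neg {σ : Equiv.Perm (Fin r)} {ε : Fin r → ℤˣ} {i j : Fin r}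
    (hε : (ε i : ℤ) = -1) (hji : j < i) : rootP σ i j ∈ PhiW σ ε := by
  have hij : j ≠ i := ne_of_lt hji
  have hij' : i ≠ j := Ne.symm hij
  have hss : σ⁻¹ i ≠ σ⁻¹ j := fun hc => hij' (σ⁻¹.injective hc)
  constructor
  · unfold rootP
    exact mem_PhiPlus_add hss
  · rcases Int.units_eq_one_or (ε j) with hj | hj
    · have hjv : (ε j : ℤ) = 1 := by rw [hj]; rfl
      have he : -(wAct σ ε (rootP σ i j)) = eVec r i - eVec r j := by
        funext m
        rw [Pi.neg_apply, wAct_rootP_apply, Pi.sub_apply]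
        by_cases h1 : m = i
        · subst h1
          rw [hε, eVec_self, eVec_ne hij']
          norm_num
        · by_cases h2 : m = j
          · subst h2
            rw [hjv, eVec_self, eVec_ne hij]
            norm_num
          · rw [eVec_ne h1, eVec_ne h2]
            ring
      rw [he]
      exact (mem_PhiPlus_sub_iff hij).2 hji
    · have hjv : (ε j : ℤ) = -1 := by rw [hj]; rfl
      have he : -(wAct σ ε (rootP σ i j)) = eVec r i + eVec r j := by
        funext m
        rw [Pi.neg_apply, wAct_rootP_apply, Pi.add_apply]
        by_cases h1 : m = i
        · subst h1
          rw [hε, eVec_self, eVec_ne hij']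
          norm_num
        · by_cases h2 : m = j
          · subst h2
            rw [hjv, eVec_self, eVec_ne hij]
            norm_num
          · rw [eVec_ne h1, eVec_ne h2]
            ring
      rw [he]
      exact mem_PhiPlus_add hij

/-- `α⁺_{i,j,w} ∉ Φ_w` when `ε i = 1` and `j < i`. -/
lemma rootP_not_mem_PhiW_pos {σ : Equiv.Perm (Fin r)} {ε : Fin r → ℤˣ} {i j : Fin r}
    (hε : (ε i : ℤ) = 1) (hji : j < i) : rootP σ i j ∉ PhiW σ ε := by
  have hij : j ≠ i := ne_of_lt hji
  have hij' : i ≠ j := Ne.symm hij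
  rintro ⟨_, hneg⟩
  rcases Int.units_eq_one_or (ε j) with hj | hj
  · have hjv : (ε j : ℤ) = 1 := by rw [hj]; rfl
    have he : -(wAct σ ε (rootP σ i j)) = -eVec r i - eVec r j := by
      funext m
      rw [Pi.neg_apply, wAct_rootP_apply, Pi.sub_apply, Pi.neg_apply]
      by_cases h1 : m = i
      · subst h1
        rw [hε, eVec_self, eVec_ne hij']
        norm_num
      · by_cases h2 : m = j
        · subst h2
          rw [hjv, eVec_self, eVec_ne hij]
          norm_num
        · rw [eVec_ne h1, eVec_ne h2]
          ring
    rw [he] at hneg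
    apply not_mem_PhiPlus_nonpos (v := -eVec r i - eVec r j) ?_ hneg
    intro k
    rw [Pi.sub_apply, Pi.neg_apply]
    unfold eVec
    split_ifs <;> norm_num
  · have hjv : (ε j : ℤ) = -1 := by rw [hj]; rfl
    have he : -(wAct σ ε (rootP σ i j)) = eVec r j - eVec r i := by
      funext m
      rw [Pi.neg_apply, wAct_rootP_apply, Pi.sub_apply]
      by_cases h1 : m = i
      · subst h1
        rw [hε, eVec_self, eVec_ne hij']
        norm_num
      · by_cases h2 : m = j
        · subst h2
          rw [hjv, eVec_self, eVec_ne hij]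
          norm_num
        · rw [eVec_ne h1, eVec_ne h2]
          ring
    rw [he] at hneg
    rw [mem_PhiPlus_sub_iff hij'] at hneg
    exact absurd hneg (not_lt.2 hji.le)

/-- `α⁻_{i,j,w} ∈ Φ_w ↔ σ⁻¹ j < σ⁻¹ i` when `ε i = -1` and `j < i`. -/
lemma rootM_mem_PhiW_neg {σ : Equiv.Perm (Fin r)} {ε : Fin r → ℤˣ} {i j : Fin r}
    (hε : (ε i : ℤ) = -1) (hji : j < i) :
    rootM σ i j ∈ PhiW σ ε ↔ σ⁻¹ j < σ⁻¹ i := by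
  have hij : j ≠ i := ne_of_lt hji
  have hij' : i ≠ j := Ne.symm hij
  have hss : σ⁻¹ i ≠ σ⁻¹ j := fun hc => hij' (σ⁻¹.injective hc)
  rcases lt_trichotomy (σ⁻¹ i) (σ⁻¹ j) with hlt | heq | hgt
  · -- `rootM = e_{σ⁻¹ j} - e_{σ⁻¹ i}`, not in `Φ_w`
    have hroot : rootM σ i j = eVec r (σ⁻¹ j) - eVec r (σ⁻¹ i) := by
      unfold rootM
      rw [if_pos hlt]
    constructor
    · rintro ⟨_, hneg⟩
      exfalso
      rcases Int.units_eq_one_or (ε j) with hj | hj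
      · have hjv : (ε j : ℤ) = 1 := by rw [hj]; rfl
        have he : -(wAct σ ε (rootM σ i j)) = -eVec r i - eVec r j := by
          rw [hroot]
          funext m
          rw [Pi.neg_apply, wAct_sub_apply, Pi.sub_apply, Pi.neg_apply]
          by_cases h1 : m = i
          · subst h1
            rw [hε, eVec_self, eVec_ne hij']
            norm_num
          · by_cases h2 : m = j
            · subst h2
              rw [hjv, eVec_self, eVec_ne hij]
              norm_num
            · rw [eVec_ne h1, eVec_ne h2]
              ring
        rw [he] at hneg
        apply not_mem_PhiPlus_nonpos (v := -eVec r i - eVec r j) ?_ hneg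
        intro k
        rw [Pi.sub_apply, Pi.neg_apply]
        unfold eVec
        split_ifs <;> norm_num
      · have hjv : (ε j : ℤ) = -1 := by rw [hj]; rfl
        have he : -(wAct σ ε (rootM σ i j)) = eVec r j - eVec r i := by
          rw [hroot]
          funext m
          rw [Pi.neg_apply, wAct_sub_apply, Pi.sub_apply]
          by_cases h1 : m = i
          · subst h1
            rw [hε, eVec_self, eVec_ne hij']
            norm_num
          · by_cases h2 : m = j
            · subst h2
              rw [hjv, eVec_self, eVec_ne hij]
              norm_num
            · rw [eVec_ne h1, eVec_ne h2]
              ring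
        rw [he] at hneg
        rw [mem_PhiPlus_sub_iff hij'] at hneg
        exact absurd hneg (not_lt.2 hji.le)
    · intro h
      exact absurd h (not_lt.2 hlt.le)
  · exact absurd (σ⁻¹.injective heq) hij'
  · -- `rootM = e_{σ⁻¹ i} - e_{σ⁻¹ j}`, in `Φ_w`
    have hroot : rootM σ i j = eVec r (σ⁻¹ i) - eVec r (σ⁻¹ j) := by
      unfold rootM
      rw [if_neg (not_lt.2 hgt.le)]
    constructor
    · intro _
      exact hgt
    · intro _
      refine ⟨?_, ?_⟩
      · rw [hroot]
        exact (mem_PhiPlus_sub_iff (Ne.symm hss)).2 hgt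
      · rcases Int.units_eq_one_or (ε j) with hj | hj
        · have hjv : (ε j : ℤ) = 1 := by rw [hj]; rfl
          have he : -(wAct σ ε (rootM σ i j)) = eVec r i + eVec r j := by
            rw [hroot]
            funext m
            rw [Pi.neg_apply, wAct_sub_apply, Pi.add_apply]
            by_cases h1 : m = i
            · subst h1
              rw [hε, eVec_self, eVec_ne hij']
              norm_num
            · by_cases h2 : m = j
              · subst h2
                rw [hjv, eVec_self, eVec_ne hij]
                norm_num
              · rw [eVec_ne h1, eVec_ne h2]
                ring
          rw [he]
          exact mem_PhiPlus_add hij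
        · have hjv : (ε j : ℤ) = -1 := by rw [hj]; rfl
          have he : -(wAct σ ε (rootM σ i j)) = eVec r i - eVec r j := by
            rw [hroot]
            funext m
            rw [Pi.neg_apply, wAct_sub_apply, Pi.sub_apply]
            by_cases h1 : m = i
            · subst h1
              rw [hε, eVec_self, eVec_ne hij']
              norm_num
            · by_cases h2 : m = j
              · subst h2
                rw [hjv, eVec_self, eVec_ne hij]
                norm_num
              · rw [eVec_ne h1, eVec_ne h2]
                ring
          rw [he]
          exact (mem_PhiPlus_sub_iff hij).2 hji

/-- `α⁻_{i,j,w} ∈ Φ_w ↔ σ⁻¹ i < σ⁻¹ j` when `ε i = 1` and `j < i`. -/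
lemma rootM_mem_PhiW_pos {σ : Equiv.Perm (Fin r)} {ε : Fin r → ℤˣ} {i j : Fin r}
    (hε : (ε i : ℤ) = 1) (hji : j < i) :
    rootM σ i j ∈ PhiW σ ε ↔ σ⁻¹ i < σ⁻¹ j := by
  have hij : j ≠ i := ne_of_lt hji
  have hij' : i ≠ j := Ne.symm hij
  have hss : σ⁻¹ i ≠ σ⁻¹ j := fun hc => hij' (σ⁻¹.injective hc)
  rcases lt_trichotomy (σ⁻¹ i) (σ⁻¹ j) with hlt | heq | hgt
  · -- `rootM = e_{σ⁻¹ j} - e_{σ⁻¹ i}`, in `Φ_w`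
    have hroot : rootM σ i j = eVec r (σ⁻¹ j) - eVec r (σ⁻¹ i) := by
      unfold rootM
      rw [if_pos hlt]
    constructor
    · intro _
      exact hlt
    · intro _
      refine ⟨?_, ?_⟩
      · rw [hroot]
        exact (mem_PhiPlus_sub_iff hss).2 hlt
      · rcases Int.units_eq_one_or (ε j) with hj | hj
        · have hjv : (ε j : ℤ) = 1 := by rw [hj]; rfl
          have he : -(wAct σ ε (rootM σ i j)) = eVec r i - eVec r j := by
            rw [hroot]
            funext m
            rw [Pi.neg_apply, wAct_sub_apply, Pi.sub_apply]
            by_cases h1 : m = i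
            · subst h1
              rw [hε, eVec_self, eVec_ne hij']
              norm_num
            · by_cases h2 : m = j
              · subst h2
                rw [hjv, eVec_self, eVec_ne hij]
                norm_num
              · rw [eVec_ne h1, eVec_ne h2]
                ring
          rw [he]
          exact (mem_PhiPlus_sub_iff hij).2 hji
        · have hjv : (ε j : ℤ) = -1 := by rw [hj]; rfl
          have he : -(wAct σ ε (rootM σ i j)) = eVec r i + eVec r j := by
            rw [hroot]
            funext m
            rw [Pi.neg_apply, wAct_sub_apply, Pi.add_apply]
            by_cases h1 : m = i
            · subst h1
              rw [hε, eVec_self, eVec_ne hij']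
              norm_num
            · by_cases h2 : m = j
              · subst h2
                rw [hjv, eVec_self, eVec_ne hij]
                norm_num
              · rw [eVec_ne h1, eVec_ne h2]
                ring
          rw [he]
          exact mem_PhiPlus_add hij
  · exact absurd (σ⁻¹.injective heq) hij'
  · -- `rootM = e_{σ⁻¹ i} - e_{σ⁻¹ j}`, not in `Φ_w`
    have hroot : rootM σ i j = eVec r (σ⁻¹ i) - eVec r (σ⁻¹ j) := by
      unfold rootM
      rw [if_neg (not_lt.2 hgt.le)]
    constructor
    · rintro ⟨_, hneg⟩
      exfalso
      rcases Int.units_eq_one_or (ε j) with hj | hj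
      · have hjv : (ε j : ℤ) = 1 := by rw [hj]; rfl
        have he : -(wAct σ ε (rootM σ i j)) = eVec r j - eVec r i := by
          rw [hroot]
          funext m
          rw [Pi.neg_apply, wAct_sub_apply, Pi.sub_apply]
          by_cases h1 : m = i
          · subst h1
            rw [hε, eVec_self, eVec_ne hij']
            norm_num
          · by_cases h2 : m = j
            · subst h2
              rw [hjv, eVec_self, eVec_ne hij]
              norm_num
            · rw [eVec_ne h1, eVec_ne h2]
              ring
        rw [he] at hneg
        rw [mem_PhiPlus_sub_iff hij'] at hneg
        exact absurd hneg (not_lt.2 hji.le)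
      · have hjv : (ε j : ℤ) = -1 := by rw [hj]; rfl
        have he : -(wAct σ ε (rootM σ i j)) = -eVec r i - eVec r j := by
          rw [hroot]
          funext m
          rw [Pi.neg_apply, wAct_sub_apply, Pi.sub_apply, Pi.neg_apply]
          by_cases h1 : m = i
          · subst h1
            rw [hε, eVec_self, eVec_ne hij']
            norm_num
          · by_cases h2 : m = j
            · subst h2
              rw [hjv, eVec_self, eVec_ne hij]
              norm_num
            · rw [eVec_ne h1, eVec_ne h2]
              ring
        rw [he] at hneg
        apply not_mem_PhiPlus_nonpos (v := -eVec r i - eVec r j) ?_ hneg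
        intro k
        rw [Pi.sub_apply, Pi.neg_apply]
        unfold eVec
        split_ifs <;> norm_num
    · intro h
      exact absurd h (not_lt.2 hgt.le)

/-! ### Multiset equality helpers -/

lemma multiset_map_eq {α β : Type*} [DecidableEq α] [DecidableEq β]
    (s : Finset α) (t : Finset β) (f : α → ℝ) (g : β → ℝ)
    (hf : ∀ x ∈ s, ∀ y ∈ s, f x = f y → x = y)
    (hg : ∀ x ∈ t, ∀ y ∈ t, g x = g y → x = y)
    (hmem : ∀ z : ℝ, (∃ x ∈ s, f x = z) ↔ (∃ y ∈ t, g y = z)) :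
    Multiset.map f s.val = Multiset.map g t.val := by
  have h1 : (Multiset.map f s.val).Nodup :=
    Multiset.Nodup.map_on (fun x hx y hy => hf x hx y hy) s.nodup
  have h2 : (Multiset.map g t.val).Nodup :=
    Multiset.Nodup.map_on (fun x hx y hy => hg x hx y hy) t.nodup
  rw [Multiset.Nodup.ext h1 h2]
  intro z
  simp only [Multiset.mem_map, Finset.mem_val]
  exact hmem z

lemma multiset_map_eq_cons {α β : Type*} [DecidableEq α] [DecidableEq β]
    (s : Finset α) (t : Finset β) (f : α → ℝ) (g : β → ℝ) (z0 : ℝ)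
    (hf : ∀ x ∈ s, ∀ y ∈ s, f x = f y → x = y)
    (hg : ∀ x ∈ t, ∀ y ∈ t, g x = g y → x = y)
    (hz0 : ∀ y ∈ t, g y ≠ z0)
    (hmem : ∀ z : ℝ, (∃ x ∈ s, f x = z) ↔ (z = z0 ∨ ∃ y ∈ t, g y = z)) :
    Multiset.map f s.val = z0 ::ₘ Multiset.map g t.val := by
  have h1 : (Multiset.map f s.val).Nodup :=
    Multiset.Nodup.map_on (fun x hx y hy => hf x hx y hy) s.nodup
  have h2' : (Multiset.map g t.val).Nodup :=
    Multiset.Nodup.map_on (fun x hx y hy => hg x hx y hy) t.nodup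
  have h2 : (z0 ::ₘ Multiset.map g t.val).Nodup := by
    rw [Multiset.nodup_cons]
    refine ⟨?_, h2'⟩
    rw [Multiset.mem_map]
    rintro ⟨y, hy, hgy⟩
    exact hz0 y (Finset.mem_val.mp hy) hgy
  rw [Multiset.Nodup.ext h1 h2]
  intro z
  rw [Multiset.mem_cons]
  simp only [Multiset.mem_map, Finset.mem_val]
  rw [hmem z]

lemma mem_Bset {n t : ℕ} : t ∈ Bset P n ↔ ∃ m, n ≤ m ∧ m ≤ r ∧ P.b n m = t := by
  unfold Bset
  rw [Finset.mem_image]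
  constructor
  · rintro ⟨m, hm, rfl⟩
    rw [Finset.mem_Icc] at hm
    exact ⟨m, hm.1, hm.2, rfl⟩
  · rintro ⟨m, h1, h2, h3⟩
    exact ⟨m, Finset.mem_Icc.2 ⟨h1, h2⟩, h3⟩

lemma mem_rowA {m t : ℕ} : t ∈ P.rowA m ↔ ∃ k, m + 1 ≤ k ∧ k ≤ r ∧ P.a m k = t := by
  unfold GTPattern.rowA
  rw [Finset.mem_image]
  constructor
  · rintro ⟨k, hk, rfl⟩
    rw [Finset.mem_Icc] at hk
    exact ⟨k, hk.1, hk.2, rfl⟩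
  · rintro ⟨k, h1, h2, h3⟩
    exact ⟨k, Finset.mem_Icc.2 ⟨h1, h2⟩, h3⟩

end GTAux
open GTAux in
open scoped Classical in
/-- Let `P ∈ GT(λ+ρ)` be a stable GT-pattern of rank `r`
with associated signed permutation `w = (σ, ε) ∈ W(C_r)`.  For each
`1 ≤ i ≤ r` (indexed by `i : Fin r` via `i ↦ i.1 + 1`, so that row index
`r+1−i` is `r − i.1`):
`u_{r+1−i,j} = 0` at every minimal `a_{r+1−i,j}` and `v_{r+1−i,j} = 0` at every
minimal `b_{r+1−i,j}`; the multiset of `v`-values at maximal entries of row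
`b_{r+1−i}` together with the `u`-values at maximal entries of row `a_{r+1−i}`
equals the multiset `{ d_λ(α) : α ∈ Φ_w^{(i)} }`.  Explicitly: if
`ε^{(i)} = +1`, all `v_{r+1−i,j}` vanish and the `u`-values at maximal entries
are `{ L_{σ⁻¹(j)} − L_{σ⁻¹(i)} : j < i, σ⁻¹(j) > σ⁻¹(i) }`; if `ε^{(i)} = −1`,
the `v`-values at maximal entries are `{L_{σ⁻¹(i)}} ∪ { L_{σ⁻¹(i)} − L_{σ⁻¹(j)}
: j < i, σ⁻¹(j) < σ⁻¹(i) }`, every entry of row `a_{r+1−i}` is maximal, and the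
`u`-values over that row are `{ L_{σ⁻¹(i)} + L_{σ⁻¹(j)} : j < i }`. -/
theorem gt_stable_gauss_exponents (r : ℕ) (hr : 1 ≤ r) (l : ℕ → ℕ)
    (P : GTPattern r l) (hP : P.Stable)
    (σ : Equiv.Perm (Fin r)) (ε : Fin r → ℤˣ)
    (hw : ∀ j : Fin r,
      (ε j : ℤ) * (Lfun l ((σ⁻¹ j).1 + 1) : ℤ) = - P.wgt (j.1 + 1)) :
    ∀ i : Fin r,
      (∀ j, r - i.1 ≤ j → j ≤ r → P.MinimalB (r - i.1) j → P.v (r - i.1) j = 0) ∧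
      (∀ j, r - i.1 + 1 ≤ j → j ≤ r → P.MinimalA (r - i.1) j → P.u (r - i.1) j = 0) ∧
      (Multiset.map (fun j => ((P.v (r - i.1) j : ℤ) : ℝ))
          ((Finset.Icc (r - i.1) r).filter (fun j => P.MaximalB (r - i.1) j)).val
        + Multiset.map (fun j => ((P.u (r - i.1) j : ℤ) : ℝ))
            ((Finset.Icc (r - i.1 + 1) r).filter (fun j => P.MaximalA (r - i.1) j)).val
        = (if rootL σ i ∈ PhiW σ ε then
            ({dlam (Lreal l r) (rootL σ i)} : Multiset ℝ) else 0)
          + Multiset.map (fun j => dlam (Lreal l r) (rootP σ i j))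
              (Finset.univ.filter
                (fun j : Fin r => j < i ∧ rootP σ i j ∈ PhiW σ ε)).val
          + Multiset.map (fun j => dlam (Lreal l r) (rootM σ i j))
              (Finset.univ.filter
                (fun j : Fin r => j < i ∧ rootM σ i j ∈ PhiW σ ε)).val) ∧
      (ε i = 1 →
        (∀ j, r - i.1 ≤ j → j ≤ r → P.v (r - i.1) j = 0) ∧
        Multiset.map (fun j => ((P.u (r - i.1) j : ℤ) : ℝ))
            ((Finset.Icc (r - i.1 + 1) r).filter (fun j => P.MaximalA (r - i.1) j)).val
          = Multiset.map
              (fun j : Fin r => Lreal l r (σ⁻¹ j) - Lreal l r (σ⁻¹ i))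
              (Finset.univ.filter
                (fun j : Fin r => j < i ∧ σ⁻¹ i < σ⁻¹ j)).val) ∧
      (ε i = -1 →
        Multiset.map (fun j => ((P.v (r - i.1) j : ℤ) : ℝ))
            ((Finset.Icc (r - i.1) r).filter (fun j => P.MaximalB (r - i.1) j)).val
          = Lreal l r (σ⁻¹ i) ::ₘ
              Multiset.map
                (fun j : Fin r => Lreal l r (σ⁻¹ i) - Lreal l r (σ⁻¹ j))
                (Finset.univ.filter
                  (fun j : Fin r => j < i ∧ σ⁻¹ j < σ⁻¹ i)).val ∧
        (∀ j, r - i.1 + 1 ≤ j → j ≤ r → P.MaximalA (r - i.1) j) ∧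
        Multiset.map (fun j => ((P.u (r - i.1) j : ℤ) : ℝ))
            (Finset.Icc (r - i.1 + 1) r).val
          = Multiset.map
              (fun j : Fin r => Lreal l r (σ⁻¹ i) + Lreal l r (σ⁻¹ j))
              (Finset.univ.filter (fun j : Fin r => j < i)).val) := by
  intro i
  have hir : (i : ℕ) < r := i.isLt
  set n := r - i.1 with hndef
  have hn1 : 1 ≤ n := by omega
  have hnr : n ≤ r := by omega
  have hin : (i : ℕ) = r - n := by omega
  have hn1e : n - 1 + 1 = n := by omega
  have hμpos : 0 < Lfun l ((σ⁻¹ i).1 + 1) := Lfun_pos l (by omega)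
  have h0a : (0:ℕ) ∉ P.rowA (n-1) := zero_not_mem_rowA P σ ε hw hP hr (by omega)
  have hrowL : P.rowA (n-1) = LS r l σ (i.1+1) := by
    have h := rowA_eq_LS P σ ε hw hP hr (n-1) (by omega)
    rw [h]
    congr 1
    omega
  have hLmono : ∀ p q : Fin r, Lfun l (p.1+1) < Lfun l (q.1+1) ↔ p < q := by
    intro p q
    rw [Fin.lt_def]
    constructor
    · intro h
      have := (Lfun_strictMono l).lt_iff_lt.1 h
      omega
    · intro h
      exact Lfun_strictMono l (by omega)
  have hLreal : ∀ k : Fin r, Lreal l r k = ((Lfun l (k.1+1) : ℕ) : ℝ) := fun k => rfl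
  have hss := step_structure P σ ε hw hP hr hn1 hnr i hin
  rcases Int.units_eq_one_or (ε i) with hεu | hεu
  · -- case ε i = 1
    have hεv : (ε i : ℤ) = 1 := by rw [hεu]; rfl
    have hB : Bset P n = P.rowA (n-1) := hss.2.2.1 hεv
    obtain ⟨hminB, hv, hrest⟩ := eps_pos_struct P σ ε hw hP hr hn1 hnr i hin hεv
    have hBfilter : (Finset.Icc n r).filter (fun j => P.MaximalB n j) = ∅ := by
      rw [Finset.filter_eq_empty_iff]
      intro j hj
      rw [Finset.mem_Icc] at hj
      exact (hminB j hj.1 hj.2).2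
    have huMS : Multiset.map (fun j => ((P.u n j : ℤ) : ℝ))
            ((Finset.Icc (n + 1) r).filter (fun j => P.MaximalA n j)).val
          = Multiset.map
              (fun j : Fin r => Lreal l r (σ⁻¹ j) - Lreal l r (σ⁻¹ i))
              (Finset.univ.filter
                (fun j : Fin r => j < i ∧ σ⁻¹ i < σ⁻¹ j)).val := by
      rcases Nat.lt_or_ge n r with hnlt | hnge
      · obtain ⟨d, hnd, hdr, hdmax, hdmin, hbd, hu, huz⟩ := hrest hnlt
        have hfilter : (Finset.Icc (n+1) r).filter (fun j => P.MaximalA n j)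
            = Finset.Icc (n+1) d := by
          ext j
          rw [Finset.mem_filter, Finset.mem_Icc, Finset.mem_Icc]
          constructor
          · rintro ⟨⟨ha1, ha2⟩, hmax⟩
            refine ⟨ha1, ?_⟩
            by_contra hcon
            exact (hdmin j (by omega) ha2).2 hmax
          · rintro ⟨ha1, ha2⟩
            exact ⟨⟨ha1, by omega⟩, (hdmax j ha1 ha2).1⟩
        rw [hfilter]
        apply multiset_map_eq
        · intro x hx y hy hxy
          rw [Finset.mem_Icc] at hx hy
          rw [hu x hx.1 hx.2, hu y hy.1 hy.2] at hxy
          push_cast at hxy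
          have h1 : (P.b n (x-1) : ℝ) = (P.b n (y-1) : ℝ) := by linarith
          have h2 : P.b n (x-1) = P.b n (y-1) := by exact_mod_cast h1
          have h3 := b_inj P hP.1 hn1 (by omega : n ≤ x - 1) (by omega : x - 1 ≤ r)
            (by omega : n ≤ y - 1) (by omega : y - 1 ≤ r) h2
          omega
        · intro x hx y hy hxy
          rw [hLreal, hLreal, hLreal] at hxy
          have h1 : (Lfun l ((σ⁻¹ x).1+1) : ℝ) = (Lfun l ((σ⁻¹ y).1+1) : ℝ) := by
            linarith
          have h2 : Lfun l ((σ⁻¹ x).1+1) = Lfun l ((σ⁻¹ y).1+1) := by exact_mod_cast h1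
          exact Linj σ h2
        · intro z
          constructor
          · rintro ⟨x, hx, hfx⟩
            rw [Finset.mem_Icc] at hx
            have htB : P.b n (x-1) ∈ Bset P n :=
              (mem_Bset P).2 ⟨x - 1, by omega, by omega, rfl⟩
            rw [hB, hrowL, mem_LS] at htB
            obtain ⟨j', hj'lt, hj'e⟩ := htB
            have htgt : Lfun l ((σ⁻¹ i).1 + 1) < P.b n (x-1) := by
              rw [← hbd]
              exact b_lt P hP.1 hn1 (by omega) (by omega) hdr
            have hσlt : σ⁻¹ i < σ⁻¹ j' := by
              rw [← hLmono (σ⁻¹ i) (σ⁻¹ j')]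
              rw [hj'e]
              exact htgt
            have hj'ne : j' ≠ i := by
              intro h
              rw [h] at hσlt
              exact lt_irrefl _ hσlt
            have hj'i : j' < i := by
              rw [Fin.lt_def]
              have : j'.1 ≠ i.1 := fun h => hj'ne (Fin.ext h)
              omega
            refine ⟨j', Finset.mem_filter.2 ⟨Finset.mem_univ _, hj'i, hσlt⟩, ?_⟩
            rw [hLreal, hLreal, hj'e]
            rw [← hfx, hu x hx.1 hx.2]
            push_cast
            ring
          · rintro ⟨y, hy, hgy⟩
            rw [Finset.mem_filter] at hy
            obtain ⟨-, hyi, hσy⟩ := hy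
            have htA : Lfun l ((σ⁻¹ y).1+1) ∈ P.rowA (n-1) := by
              rw [hrowL]
              exact mem_LS.2 ⟨y, by rw [Fin.lt_def] at hyi; omega, rfl⟩
            rw [← hB] at htA
            obtain ⟨m, hm1, hm2, hbm⟩ := (mem_Bset P).1 htA
            have htgt : Lfun l ((σ⁻¹ i).1 + 1) < Lfun l ((σ⁻¹ y).1+1) :=
              (hLmono (σ⁻¹ i) (σ⁻¹ y)).2 hσy
            have hmd : m < d := by
              by_contra hcon
              have hle : P.b n m ≤ P.b n d := b_le P hP.1 hn1 (by omega) (by omega) (by omega)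
              rw [hbm, hbd] at hle
              omega
            refine ⟨m + 1, Finset.mem_Icc.2 ⟨by omega, by omega⟩, ?_⟩
            rw [hu (m+1) (by omega) (by omega)]
            have he : m + 1 - 1 = m := by omega
            rw [he, hbm, ← hgy, hLreal, hLreal]
            push_cast
            ring
      · -- `n = r`: both sides empty
        have he1 : Finset.Icc (n+1) r = ∅ := Finset.Icc_eq_empty (by omega)
        have he2 : (Finset.univ.filter
            (fun j : Fin r => j < i ∧ σ⁻¹ i < σ⁻¹ j)) = ∅ := by
          rw [Finset.filter_eq_empty_iff]
          intro j _
          rintro ⟨hji, -⟩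
          rw [Fin.lt_def] at hji
          omega
        rw [he1, he2]
        simp
    refine ⟨fun j h1 h2 _ => hv j, ?_, ?_, fun _ => ⟨fun j _ _ => hv j, huMS⟩, ?_⟩
    · -- minimal a ⇒ u = 0
      intro j h1 h2 hmin
      have hnlt : n < r := by omega
      obtain ⟨d, hnd, hdr, hdmax, hdmin, hbd, hu, huz⟩ := hrest hnlt
      rcases le_or_gt j d with h | h
      · exact absurd hmin (hdmax j h1 h).2
      · exact huz j h h2
    · -- the combined multiset identity
      have hPfilter : (Finset.univ.filter
          (fun j : Fin r => j < i ∧ rootP σ i j ∈ PhiW σ ε)) = ∅ := by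
        rw [Finset.filter_eq_empty_iff]
        intro j _
        rintro ⟨hji, hmem⟩
        exact rootP_not_mem_PhiW_pos hεv hji hmem
      have hMfilter : (Finset.univ.filter
            (fun j : Fin r => j < i ∧ rootM σ i j ∈ PhiW σ ε))
          = Finset.univ.filter (fun j : Fin r => j < i ∧ σ⁻¹ i < σ⁻¹ j) := by
        ext j
        rw [Finset.mem_filter, Finset.mem_filter]
        constructor
        · rintro ⟨h1, h2, h3⟩
          exact ⟨h1, h2, (rootM_mem_PhiW_pos hεv h2).1 h3⟩
        · rintro ⟨h1, h2, h3⟩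
          exact ⟨h1, h2, (rootM_mem_PhiW_pos hεv h2).2 h3⟩
      rw [hBfilter, hPfilter, hMfilter, if_neg (rootL_not_mem_PhiW_pos hεv)]
      have hmapM : Multiset.map (fun j => dlam (Lreal l r) (rootM σ i j))
            (Finset.univ.filter (fun j : Fin r => j < i ∧ σ⁻¹ i < σ⁻¹ j)).val
          = Multiset.map (fun j : Fin r => Lreal l r (σ⁻¹ j) - Lreal l r (σ⁻¹ i))
            (Finset.univ.filter (fun j : Fin r => j < i ∧ σ⁻¹ i < σ⁻¹ j)).val := by
        apply Multiset.map_congr rfl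
        intro j hj
        rw [Finset.mem_val, Finset.mem_filter] at hj
        exact dlam_rootM_gt (Lreal l r) σ hj.2.2
      rw [hmapM]
      rw [huMS]
      simp
    · -- ε i = -1 is impossible here
      intro h
      rw [h] at hεu
      exact absurd hεu (by decide)
  · -- case ε i = -1
    have hεv : (ε i : ℤ) = -1 := by rw [hεu]; rfl
    have hB : Bset P n = insert 0 ((P.rowA (n-1)).erase (Lfun l ((σ⁻¹ i).1 + 1))) :=
      hss.2.2.2 hεv
    obtain ⟨c, hnc, hcr, hcmin, hcmaxnm, hvmin, hac, hvtele, hallmax, huval⟩ :=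
      eps_neg_struct P σ ε hw hP hr hn1 hnr i hin hεv
    have hbr0 : P.b n r = 0 := by
      rcases (hcmaxnm r hcr (le_refl r)).1 with ⟨h1, _⟩ | ⟨_, h2⟩
      · omega
      · exact h2
    have hvMS : Multiset.map (fun j => ((P.v n j : ℤ) : ℝ))
            ((Finset.Icc n r).filter (fun j => P.MaximalB n j)).val
          = Lreal l r (σ⁻¹ i) ::ₘ
              Multiset.map
                (fun j : Fin r => Lreal l r (σ⁻¹ i) - Lreal l r (σ⁻¹ j))
                (Finset.univ.filter
                  (fun j : Fin r => j < i ∧ σ⁻¹ j < σ⁻¹ i)).val := by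
      have hzr : P.a (n-1) (r+1) = 0 := P.a_zero _ _ (by omega)
      have hBfilter : (Finset.Icc n r).filter (fun j => P.MaximalB n j)
          = Finset.Icc c r := by
        ext j
        rw [Finset.mem_filter, Finset.mem_Icc, Finset.mem_Icc]
        constructor
        · rintro ⟨⟨h1, h2⟩, hmax⟩
          refine ⟨?_, h2⟩
          by_contra hcon
          exact (hcmin j h1 (by omega)).2 hmax
        · rintro ⟨h1, h2⟩
          exact ⟨⟨by omega, h2⟩, (hcmaxnm j h1 h2).1⟩
      rw [hBfilter]
      apply multiset_map_eq_cons
      · -- injectivity of the v-values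
        intro x hx y hy hxy
        rw [Finset.mem_Icc] at hx hy
        rw [hvtele x hx.1 hx.2, hvtele y hy.1 hy.2] at hxy
        push_cast at hxy
        have h1 : (P.a (n-1) (x+1) : ℝ) = (P.a (n-1) (y+1) : ℝ) := by linarith
        have h2 : P.a (n-1) (x+1) = P.a (n-1) (y+1) := by exact_mod_cast h1
        by_cases hxr : x = r
        · by_cases hyr : y = r
          · omega
          · exfalso
            rw [hxr, hzr] at h2
            apply h0a
            rw [h2]
            exact (mem_rowA P).2 ⟨y+1, by omega, by omega, rfl⟩
        · by_cases hyr : y = r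
          · exfalso
            rw [hyr, hzr] at h2
            apply h0a
            rw [← h2]
            exact (mem_rowA P).2 ⟨x+1, by omega, by omega, rfl⟩
          · have h3 := a_inj P hP.1 (by omega : n - 1 < r) (by omega : (n-1) + 1 ≤ x + 1)
              (by omega : x + 1 ≤ r) (by omega : (n-1) + 1 ≤ y + 1) (by omega : y + 1 ≤ r) h2
            omega
      · -- injectivity of the target values
        intro x hx y hy hxy
        rw [hLreal, hLreal, hLreal] at hxy
        have h1 : (Lfun l ((σ⁻¹ x).1+1) : ℝ) = (Lfun l ((σ⁻¹ y).1+1) : ℝ) := by linarith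
        have h2 : Lfun l ((σ⁻¹ x).1+1) = Lfun l ((σ⁻¹ y).1+1) := by exact_mod_cast h1
        exact Linj σ h2
      · -- the cons value is not attained
        intro y hy
        rw [hLreal, hLreal]
        have h1 : (0:ℝ) < (Lfun l ((σ⁻¹ y).1+1) : ℝ) := by
          exact_mod_cast Lfun_pos l (by omega)
        intro hcon
        have : (Lfun l ((σ⁻¹ y).1+1) : ℝ) = 0 := by linarith
        linarith
      · -- membership
        intro z
        constructor
        · rintro ⟨x, hx, hfx⟩
          rw [Finset.mem_Icc] at hx
          by_cases hxr : x = r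
          · left
            rw [← hfx, hvtele x hx.1 hx.2, hxr, hzr, hLreal]
            push_cast
            ring
          · right
            have htA : P.a (n-1) (x+1) ∈ P.rowA (n-1) :=
              (mem_rowA P).2 ⟨x+1, by omega, by omega, rfl⟩
            rw [hrowL] at htA
            obtain ⟨j', hj'lt, hj'e⟩ := mem_LS.1 htA
            have htlt : P.a (n-1) (x+1) < Lfun l ((σ⁻¹ i).1 + 1) := by
              rw [← hac]
              exact a_lt P hP.1 (by omega : n - 1 < r) (by omega : (n-1) + 1 ≤ c)
                (by omega : c < x + 1) (by omega)
            have hσlt : σ⁻¹ j' < σ⁻¹ i := by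
              rw [← hLmono (σ⁻¹ j') (σ⁻¹ i)]
              rw [hj'e]
              exact htlt
            have hj'ne : j' ≠ i := by
              intro h
              rw [h] at hσlt
              exact lt_irrefl _ hσlt
            have hj'i : j' < i := by
              rw [Fin.lt_def]
              have : j'.1 ≠ i.1 := fun h => hj'ne (Fin.ext h)
              omega
            refine ⟨j', Finset.mem_filter.2 ⟨Finset.mem_univ _, hj'i, hσlt⟩, ?_⟩
            rw [hLreal, hLreal, hj'e, ← hfx, hvtele x hx.1 hx.2]
            push_cast
            ring
        · rintro (hz | ⟨y, hy, hgy⟩)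
          · refine ⟨r, Finset.mem_Icc.2 ⟨hcr, le_refl r⟩, ?_⟩
            rw [hvtele r hcr (le_refl r), hzr, hz, hLreal]
            push_cast
            ring
          · rw [Finset.mem_filter] at hy
            obtain ⟨-, hyi, hσy⟩ := hy
            have htA : Lfun l ((σ⁻¹ y).1+1) ∈ P.rowA (n-1) := by
              rw [hrowL]
              exact mem_LS.2 ⟨y, by rw [Fin.lt_def] at hyi; omega, rfl⟩
            obtain ⟨m, hm1, hm2, ham⟩ := (mem_rowA P).1 htA
            have htlt : Lfun l ((σ⁻¹ y).1+1) < Lfun l ((σ⁻¹ i).1+1) :=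
              (hLmono (σ⁻¹ y) (σ⁻¹ i)).2 hσy
            have hmc : c < m := by
              by_contra hcon
              have hle : P.a (n-1) c ≤ P.a (n-1) m :=
                a_le P hP.1 (by omega : n - 1 < r) (by omega) (by omega) hcr
              rw [ham, hac] at hle
              omega
            refine ⟨m - 1, Finset.mem_Icc.2 ⟨by omega, by omega⟩, ?_⟩
            have he : m - 1 + 1 = m := by omega
            rw [hvtele (m-1) (by omega) (by omega), he, ham, ← hgy, hLreal, hLreal]
            push_cast
            ring
    have huMS : Multiset.map (fun j => ((P.u n j : ℤ) : ℝ))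
            (Finset.Icc (n + 1) r).val
          = Multiset.map
              (fun j : Fin r => Lreal l r (σ⁻¹ i) + Lreal l r (σ⁻¹ j))
              (Finset.univ.filter (fun j : Fin r => j < i)).val := by
      apply multiset_map_eq
      · -- injectivity of the u-values
        intro x hx y hy hxy
        rw [Finset.mem_Icc] at hx hy
        rw [huval x hx.1 hx.2, huval y hy.1 hy.2] at hxy
        push_cast at hxy
        have h1 : (P.b n (x-1) : ℝ) = (P.b n (y-1) : ℝ) := by linarith
        have h2 : P.b n (x-1) = P.b n (y-1) := by exact_mod_cast h1
        have h3 := b_inj P hP.1 hn1 (by omega : n ≤ x - 1) (by omega : x - 1 ≤ r)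
          (by omega : n ≤ y - 1) (by omega : y - 1 ≤ r) h2
        omega
      · intro x hx y hy hxy
        rw [hLreal, hLreal, hLreal] at hxy
        have h1 : (Lfun l ((σ⁻¹ x).1+1) : ℝ) = (Lfun l ((σ⁻¹ y).1+1) : ℝ) := by linarith
        have h2 : Lfun l ((σ⁻¹ x).1+1) = Lfun l ((σ⁻¹ y).1+1) := by exact_mod_cast h1
        exact Linj σ h2
      · intro z
        constructor
        · rintro ⟨x, hx, hfx⟩
          rw [Finset.mem_Icc] at hx
          have htpos : 0 < P.b n (x-1) := by
            have := b_lt P hP.1 hn1 (by omega : n ≤ x - 1) (by omega : x - 1 < r) (le_refl r)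
            omega
          have htB : P.b n (x-1) ∈ Bset P n :=
            (mem_Bset P).2 ⟨x - 1, by omega, by omega, rfl⟩
          rw [hB, Finset.mem_insert] at htB
          rcases htB with h0 | htB
          · omega
          · have htne : P.b n (x-1) ≠ Lfun l ((σ⁻¹ i).1 + 1) :=
              (Finset.mem_erase.1 htB).1
            have htA : P.b n (x-1) ∈ P.rowA (n-1) := Finset.mem_of_mem_erase htB
            rw [hrowL] at htA
            obtain ⟨j', hj'lt, hj'e⟩ := mem_LS.1 htA
            have hj'ne : j' ≠ i := by
              intro h
              rw [h] at hj'e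
              exact htne hj'e.symm
            have hj'i : j' < i := by
              rw [Fin.lt_def]
              have : j'.1 ≠ i.1 := fun h => hj'ne (Fin.ext h)
              omega
            refine ⟨j', Finset.mem_filter.2 ⟨Finset.mem_univ _, hj'i⟩, ?_⟩
            rw [hLreal, hLreal, hj'e, ← hfx, huval x hx.1 hx.2]
            push_cast
            ring
        · rintro ⟨y, hy, hgy⟩
          rw [Finset.mem_filter] at hy
          obtain ⟨-, hyi⟩ := hy
          have hyne : Lfun l ((σ⁻¹ y).1+1) ≠ Lfun l ((σ⁻¹ i).1+1) := by
            intro h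
            have := Linj σ h
            rw [this] at hyi
            exact lt_irrefl _ hyi
          have htA : Lfun l ((σ⁻¹ y).1+1) ∈ P.rowA (n-1) := by
            rw [hrowL]
            exact mem_LS.2 ⟨y, by rw [Fin.lt_def] at hyi; omega, rfl⟩
          have htB : Lfun l ((σ⁻¹ y).1+1) ∈ Bset P n := by
            rw [hB]
            exact Finset.mem_insert_of_mem (Finset.mem_erase.2 ⟨hyne, htA⟩)
          obtain ⟨m, hm1, hm2, hbm⟩ := (mem_Bset P).1 htB
          have hmr : m ≠ r := by
            intro h
            rw [h, hbr0] at hbm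
            have : 0 < Lfun l ((σ⁻¹ y).1 + 1) := Lfun_pos l (by omega)
            omega
          refine ⟨m + 1, Finset.mem_Icc.2 ⟨by omega, by omega⟩, ?_⟩
          have he : m + 1 - 1 = m := by omega
          rw [huval (m+1) (by omega) (by omega), he, hbm, ← hgy, hLreal, hLreal]
          push_cast
          ring
    refine ⟨?_, ?_, ?_, ?_, fun _ => ⟨hvMS, fun j h1 h2 => (hallmax j h1 h2).1, huMS⟩⟩
    · exact fun j h1 h2 hmin => hvmin j h1 h2 hmin
    · intro j h1 h2 hmin
      exact absurd hmin (hallmax j h1 h2).2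
    · -- the combined multiset identity
      have hAfilter : (Finset.Icc (n+1) r).filter (fun j => P.MaximalA n j)
          = Finset.Icc (n+1) r := by
        rw [Finset.filter_eq_self]
        intro j hj
        rw [Finset.mem_Icc] at hj
        exact (hallmax j hj.1 hj.2).1
      have hPfilter : (Finset.univ.filter
            (fun j : Fin r => j < i ∧ rootP σ i j ∈ PhiW σ ε))
          = Finset.univ.filter (fun j : Fin r => j < i) := by
        ext j
        rw [Finset.mem_filter, Finset.mem_filter]
        constructor
        · rintro ⟨h1, h2, _⟩
          exact ⟨h1, h2⟩
        · rintro ⟨h1, h2⟩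
          exact ⟨h1, h2, rootP_mem_PhiW_neg hεv h2⟩
      have hMfilter : (Finset.univ.filter
            (fun j : Fin r => j < i ∧ rootM σ i j ∈ PhiW σ ε))
          = Finset.univ.filter (fun j : Fin r => j < i ∧ σ⁻¹ j < σ⁻¹ i) := by
        ext j
        rw [Finset.mem_filter, Finset.mem_filter]
        constructor
        · rintro ⟨h1, h2, h3⟩
          exact ⟨h1, h2, (rootM_mem_PhiW_neg hεv h2).1 h3⟩
        · rintro ⟨h1, h2, h3⟩
          exact ⟨h1, h2, (rootM_mem_PhiW_neg hεv h2).2 h3⟩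
      rw [hAfilter, hPfilter, hMfilter, if_pos (rootL_mem_PhiW_neg hεv),
        dlam_rootL]
      have hmapP : Multiset.map (fun j => dlam (Lreal l r) (rootP σ i j))
            (Finset.univ.filter (fun j : Fin r => j < i)).val
          = Multiset.map (fun j : Fin r => Lreal l r (σ⁻¹ i) + Lreal l r (σ⁻¹ j))
            (Finset.univ.filter (fun j : Fin r => j < i)).val := by
        apply Multiset.map_congr rfl
        intro j hj
        rw [Finset.mem_val, Finset.mem_filter] at hj
        rw [dlam_rootP (Lreal l r) σ (ne_of_lt hj.2)]
        ring
      have hmapM : Multiset.map (fun j => dlam (Lreal l r) (rootM σ i j))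
            (Finset.univ.filter (fun j : Fin r => j < i ∧ σ⁻¹ j < σ⁻¹ i)).val
          = Multiset.map (fun j : Fin r => Lreal l r (σ⁻¹ i) - Lreal l r (σ⁻¹ j))
            (Finset.univ.filter (fun j : Fin r => j < i ∧ σ⁻¹ j < σ⁻¹ i)).val := by
        apply Multiset.map_congr rfl
        intro j hj
        rw [Finset.mem_val, Finset.mem_filter] at hj
        exact dlam_rootM_lt (Lreal l r) σ hj.2.2
      rw [hmapP, hmapM, hvMS, huMS]
      rw [Multiset.cons_add, Multiset.singleton_add, Multiset.cons_add]
      congr 1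
      exact add_comm _ _
    · intro h
      rw [h] at hεu
      exact absurd hεu (by decide)
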